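/- arXiv:2309.11391 — 6 statements merged into one kernel-verified Lean document; each statement's English description precedes it below -/
import Mathlib

section
/- Given k ∈ ℕ and an interlacing pair (m̄, n̄) of k-element subsets of the even natural numbers 2ℕ, there exists a k-element subset p̄ of ℕ such that the pairs (m̄, p̄) and (n̄, p̄) are both strongly interlacing. -/
open Filter Topology
open scoped ZeroAtInfty ENNReal NNReal

/-- Increasing `k`-tuples of naturals: the vertices `[ℕ]^k` of the interlacing graph. -/
def IncTuple (k : ℕ) := {f : Fin k → ℕ // StrictMono f}

/-- `m₁ ≤ n₁ ≤ m₂ ≤ n₂ ≤ ⋯ ≤ m_k ≤ n_k`. -/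
def InterLE {k : ℕ} (m n : Fin k → ℕ) : Prop :=
  (∀ i, m i ≤ n i) ∧ ∀ (i : ℕ) (h : i + 1 < k), n ⟨i, Nat.lt_of_succ_lt h⟩ ≤ m ⟨i + 1, h⟩

/-- The pair `(m, n)` interlaces. -/
def Interlacing {k : ℕ} (m n : Fin k → ℕ) : Prop := InterLE m n ∨ InterLE n m

/-- `m₁ ≤ n₁ < m₂ ≤ n₂ < ⋯ < m_k ≤ n_k`. -/
def StrongInterLE {k : ℕ} (m n : Fin k → ℕ) : Prop :=
  (∀ i, m i ≤ n i) ∧ ∀ (i : ℕ) (h : i + 1 < k), n ⟨i, Nat.lt_of_succ_lt h⟩ < m ⟨i + 1, h⟩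

/-- The pair `(m, n)` is strongly interlacing. -/
def StronglyInterlacing {k : ℕ} (m n : Fin k → ℕ) : Prop :=
  StrongInterLE m n ∨ StrongInterLE n m

/-- The interlacing graph on `[ℕ]^k`. -/
def interGraph (k : ℕ) : SimpleGraph (IncTuple k) where
  Adj m n := m ≠ n ∧ Interlacing m.1 n.1
  symm := ⟨fun _ _ h => ⟨h.1.symm, h.2.symm⟩⟩
  loopless := ⟨fun _ h => h.1 rfl⟩

/-- The interlacing graph metric `d_I`. -/
noncomputable def dI {k : ℕ} (m n : IncTuple k) : ℕ := (interGraph k).dist m n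

/-- All entries of the tuple belong to `L`. -/
def memAll {k : ℕ} (L : Set ℕ) (m : IncTuple k) : Prop := ∀ i, m.1 i ∈ L

/-- `m̄ < n̄`: every entry of `m` is below every entry of `n`. -/
def ordLT {k : ℕ} (m n : IncTuple k) : Prop := ∀ i j, m.1 i < n.1 j

/-- Kalton's `Q(ε, δ)`-property of a metric space. -/
def HasQProp (M : Type*) [MetricSpace M] (ε δ : ℝ) : Prop :=
  ∀ (k : ℕ) (f : IncTuple k → M),
    (∀ m n : IncTuple k, dist (f m) (f n) ≤ δ * dI m n) →
    ∃ L : Set ℕ, L.Infinite ∧ ∀ m n : IncTuple k, memAll L m → memAll L n → ordLT m n →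
      dist (f m) (f n) < ε

/-- The modulus `Δ_M(ε)`. -/
noncomputable def DeltaMod (M : Type*) [MetricSpace M] (ε : ℝ) : ℝ :=
  sSup {δ : ℝ | 0 ≤ δ ∧ HasQProp M ε δ}

/-- The constant `q_M`. -/
noncomputable def qMod (M : Type*) [MetricSpace M] : ℝ :=
  sSup {c : ℝ | 0 ≤ c ∧ ∀ ε : ℝ, 0 < ε → c * ε ≤ DeltaMod M ε}

/-- Boundedness of a map into a metric space. -/
def IsBddMap {α : Type*} {M : Type*} [MetricSpace M] (f : α → M) : Prop :=
  ∃ R : ℝ, ∀ x y, dist (f x) (f y) ≤ R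

/-- Property `Q` with constant `C`: every Lipschitz map on an interlacing graph
concentrates on `[L]^k` up to `C·Lip(f)`. -/
def HasPropQConst (M : Type*) [MetricSpace M] (C : ℝ) : Prop :=
  ∀ (k : ℕ) (f : IncTuple k → M) (K : ℝ), 0 ≤ K →
    (∀ m n : IncTuple k, dist (f m) (f n) ≤ K * dI m n) →
    ∃ L : Set ℕ, L.Infinite ∧ ∀ m n : IncTuple k, memAll L m → memAll L n →
      dist (f m) (f n) ≤ C * K

/-- Property `Q`. -/
def HasPropQ (M : Type*) [MetricSpace M] : Prop := ∃ C : ℝ, 0 ≤ C ∧ HasPropQConst M C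

/-- The property `Q` constant `Q_M`. -/
noncomputable def QConst (M : Type*) [MetricSpace M] : ℝ :=
  sInf {C : ℝ | 0 ≤ C ∧ HasPropQConst M C}

theorem compl_card {l m : ℕ} (P : Finset (Fin (l + m))) (hP : P.card = l) : Pᶜ.card = m := by
  rw [Finset.card_compl, hP, Fintype.card_fin]; omega

/-- The increasing subtuple `(n_i : i ∈ P)`. -/
def subTuple {k j : ℕ} (n : Fin k → ℕ) (P : Finset (Fin k)) (h : P.card = j) :
    Fin j → ℕ := fun i => n (P.orderEmbOfFin h i)

/-- The set of distances `d_M(f(n_i : i ∈ P), g(n_i : i ∈ P^c))` over `n̄ ∈ [L]^{l+m}`. -/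
def cutDistSet {l m : ℕ} {M : Type*} [MetricSpace M]
    (f : (Fin l → ℕ) → M) (g : (Fin m → ℕ) → M) (L : Set ℕ)
    (P : Finset (Fin (l + m))) (hP : P.card = l) : Set ℝ :=
  {d : ℝ | ∃ n : Fin (l + m) → ℕ, StrictMono n ∧ (∀ i, n i ∈ L) ∧
    d = dist (f (subTuple n P hP)) (g (subTuple n Pᶜ (compl_card P hP)))}

/-- `C`-cut stability. -/
def CutStableWith (M : Type*) [MetricSpace M] (C : ℝ) : Prop :=
  ∀ (l m : ℕ) (f : (Fin l → ℕ) → M) (g : (Fin m → ℕ) → M),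
    IsBddMap f → IsBddMap g → ∀ L : Set ℕ, L.Infinite →
    ∀ (P Q : Finset (Fin (l + m))) (hP : P.card = l) (hQ : Q.card = l),
      sInf (cutDistSet f g L P hP) ≤ C * sSup (cutDistSet f g L Q hQ)

/-- A permutation of `{1,…,l+m}` preserving the order on `{1,…,l}` and on `{l+1,…,l+m}`. -/
def OrderPreservingPerm {l m : ℕ} (π : Equiv.Perm (Fin (l + m))) : Prop :=
  StrictMono (fun i : Fin l => π (Fin.castAdd m i)) ∧
  StrictMono (fun j : Fin m => π (Fin.natAdd l j))

/-- Distances `d_M(f(n_{π(1)},…,n_{π(l)}), g(n_{π(l+1)},…,n_{π(l+m)}))` over `n̄ ∈ [L]^{l+m}`. -/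
def permDistSet {l m : ℕ} {M : Type*} [MetricSpace M]
    (f : (Fin l → ℕ) → M) (g : (Fin m → ℕ) → M) (L : Set ℕ)
    (π : Equiv.Perm (Fin (l + m))) : Set ℝ :=
  {d : ℝ | ∃ n : Fin (l + m) → ℕ, StrictMono n ∧ (∀ i, n i ∈ L) ∧
    d = dist (f (fun i => n (π (Fin.castAdd m i)))) (g (fun j => n (π (Fin.natAdd l j))))}

/-- `C`-upper stability. -/
def UpperStableWith (M : Type*) [MetricSpace M] (C : ℝ) : Prop :=
  ∀ (l m : ℕ) (f : (Fin l → ℕ) → M) (g : (Fin m → ℕ) → M),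
    IsBddMap f → IsBddMap g → ∀ L : Set ℕ, L.Infinite →
    ∀ π : Equiv.Perm (Fin (l + m)), OrderPreservingPerm π →
      sInf (permDistSet f g L (Equiv.refl _)) ≤ C * sSup (permDistSet f g L π)

/-- The modulus of continuity `ω_h`. -/
noncomputable def omegaMod {M N : Type*} [MetricSpace M] [MetricSpace N] (h : M → N)
    (t : ℝ) : ℝ≥0∞ :=
  ⨆ p : {p : M × M // dist p.1 p.2 ≤ t}, edist (h p.1.1) (h p.1.2)

/-- The compression modulus `ρ_h`. -/
noncomputable def rhoMod {M N : Type*} [MetricSpace M] [MetricSpace N] (h : M → N)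
    (t : ℝ) : ℝ≥0∞ :=
  ⨅ p : {p : M × M // t ≤ dist p.1 p.2}, edist (h p.1.1) (h p.1.2)

/-- A coarse embedding, expressed via the moduli. -/
def CoarseEmbMod {M N : Type*} [MetricSpace M] [MetricSpace N] (h : M → N) : Prop :=
  (∀ t : ℝ, omegaMod h t < ⊤) ∧ Tendsto (rhoMod h) atTop (𝓝 ⊤)

/-- A uniform embedding, expressed via the moduli. -/
def UniformEmbMod {M N : Type*} [MetricSpace M] [MetricSpace N] (h : M → N) : Prop :=
  Tendsto (omegaMod h) (𝓝[>] (0 : ℝ)) (𝓝 0) ∧ ∀ t : ℝ, 0 < t → 0 < rhoMod h t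

/-- A free ultrafilter on `ℕ`. -/
def FreeUF (U : Ultrafilter ℕ) : Prop := (U : Filter ℕ) ≤ Filter.cofinite

/-- The iterated ultrafilter limit `lim_{n₁,U₁} ⋯ lim_{n_k,U_k} F(n₁,…,n_k)`. -/
noncomputable def ultraLim : (k : ℕ) → (Fin k → Ultrafilter ℕ) → ((Fin k → ℕ) → ℝ) → ℝ
  | 0, _, F => F (fun i => i.elim0)
  | k + 1, U, F => ultraLim k (fun i => U i.castSucc)
      (fun n => limUnder (U (Fin.last k)) (fun j => F (Fin.snoc n j)))

/-- An unrooted (countably branching) tree of height `k` in `X`. -/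
def TreeU (X : Type*) (k : ℕ) := (i : Fin k) → (Fin (i.1 + 1) → ℕ) → X

/-- A rooted (countably branching) tree of height `k` in `X`. -/
def TreeR (X : Type*) (k : ℕ) := (i : Fin (k + 1)) → (Fin i.1 → ℕ) → X

/-- A normalized unrooted tree takes values in the unit sphere. -/
def NormalizedU {X : Type*} [NormedAddCommGroup X] {k : ℕ} (t : TreeU X k) : Prop :=
  ∀ i v, ‖t i v‖ = 1

/-- A normalized rooted tree takes values in the unit sphere. -/
def NormalizedR {X : Type*} [NormedAddCommGroup X] {k : ℕ} (t : TreeR X k) : Prop :=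
  ∀ i v, ‖t i v‖ = 1

/-- `∀_{U₁} n₁ ⋯ ∀_{U_j} n_j, P(n₁,…,n_j)`. -/
def iterEventually : (j : ℕ) → (Fin j → Ultrafilter ℕ) → ((Fin j → ℕ) → Prop) → Prop
  | 0, _, P => P (fun i => i.elim0)
  | j + 1, U, P => iterEventually j (fun i => U i.castSucc)
      (fun n => ∀ᶠ a in U (Fin.last j), P (Fin.snoc n a))

/-- An unrooted tree is `Ū`-weakly null. -/
def WeaklyNullU {X : Type*} [NormedAddCommGroup X] [NormedSpace ℝ X] {k : ℕ}
    (U : Fin k → Ultrafilter ℕ) (t : TreeU X k) : Prop :=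
  ∀ i : Fin k, iterEventually i.1 (fun j => U (Fin.castLE i.isLt.le j))
    (fun pre => ∀ φ : X →L[ℝ] ℝ,
      Tendsto (fun a : ℕ => φ (t i (Fin.snoc pre a))) (U i) (𝓝 0))

/-- A rooted tree is `Ū`-weakly null. -/
def WeaklyNullR {X : Type*} [NormedAddCommGroup X] [NormedSpace ℝ X] {k : ℕ}
    (U : Fin k → Ultrafilter ℕ) (t : TreeR X k) : Prop :=
  ∀ i : Fin k, iterEventually i.1 (fun j => U (Fin.castLE i.isLt.le j))
    (fun pre => ∀ φ : X →L[ℝ] ℝ,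
      Tendsto (fun a : ℕ => φ (t i.succ (Fin.snoc pre a))) (U i) (𝓝 0))

/-- The norm `N_t^{Ū}(x ⊕ Σ aᵢ eᵢ)`. -/
noncomputable def treeNorm {X : Type*} [NormedAddCommGroup X] [NormedSpace ℝ X] {k : ℕ}
    (U : Fin k → Ultrafilter ℕ) (t : TreeU X k) (x : X) (a : Fin k → ℝ) : ℝ :=
  ultraLim k U (fun n => ‖x + ∑ i : Fin k, a i • t i (fun j => n (Fin.castLE i.isLt j))‖)

/-- The number of elements of `P` that are `≤ j`. -/
def rankIn {k : ℕ} (P : Finset (Fin k)) (j : Fin k) : ℕ :=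
  (P.filter (fun i => i ≤ j)).card

/-- The `P`-intertwining `s ⊛_P t` of two trees. -/
def intertwine {X : Type*} {l m : ℕ} (P : Finset (Fin (l + m))) (hP : P.card = l)
    (s : TreeU X l) (t : TreeU X m) : TreeU X (l + m) := fun j v =>
  let v' : Fin (l + m) → ℕ := fun p => if h : p.1 < j.1 + 1 then v ⟨p.1, h⟩ else 0
  if hj : j ∈ P then
    s ⟨rankIn P j - 1, by
        have h1 : 0 < rankIn P j :=
          Finset.card_pos.mpr ⟨j, Finset.mem_filter.mpr ⟨hj, le_refl j⟩⟩
        have h2 : rankIn P j ≤ l := (Finset.card_filter_le P _).trans hP.le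
        omega⟩
      (fun b => v' (P.orderEmbOfFin hP ⟨b.1, by
        have h1 : 0 < rankIn P j :=
          Finset.card_pos.mpr ⟨j, Finset.mem_filter.mpr ⟨hj, le_refl j⟩⟩
        have h2 : rankIn P j ≤ l := (Finset.card_filter_le P _).trans hP.le
        have h3 := b.isLt
        omega⟩))
  else
    t ⟨rankIn Pᶜ j - 1, by
        have h1 : 0 < rankIn Pᶜ j :=
          Finset.card_pos.mpr ⟨j, Finset.mem_filter.mpr ⟨Finset.mem_compl.mpr hj, le_refl j⟩⟩
        have h2 : rankIn Pᶜ j ≤ m := (Finset.card_filter_le Pᶜ _).trans (compl_card P hP).le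
        omega⟩
      (fun b => v' (Pᶜ.orderEmbOfFin (compl_card P hP) ⟨b.1, by
        have h1 : 0 < rankIn Pᶜ j :=
          Finset.card_pos.mpr ⟨j, Finset.mem_filter.mpr ⟨Finset.mem_compl.mpr hj, le_refl j⟩⟩
        have h2 : rankIn Pᶜ j ≤ m := (Finset.card_filter_le Pᶜ _).trans (compl_card P hP).le
        have h3 := b.isLt
        omega⟩))

/-- The unrooted part of a rooted tree. -/
def unroot {X : Type*} {k : ℕ} (t : TreeR X k) : TreeU X k := fun i v => t i.succ v

/-- The summing basis of `c₀`. -/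
noncomputable def summingBasis (n : ℕ) : C₀(ℕ, ℝ) :=
  ⟨⟨fun x => if x ≤ n then 1 else 0, continuous_of_discreteTopology⟩, by
    rw [cocompact_eq_cofinite, Nat.cofinite_eq_atTop]
    refine (tendsto_congr' ?_).mpr tendsto_const_nhds
    filter_upwards [eventually_gt_atTop n] with x hx
    simp [if_neg (not_le.mpr hx)]⟩

/-- The canonical map `[ℕ]^k → c₀`, `n̄ ↦ Σᵢ s_{nᵢ}`. -/
noncomputable def interMap {k : ℕ} (m : Fin k → ℕ) : C₀(ℕ, ℝ) :=
  ∑ i : Fin k, summingBasis (m i)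

/-- Krivine–Maurey stability of a metric space. -/
def StableSpace (M : Type*) [MetricSpace M] : Prop :=
  ∀ U V : Ultrafilter ℕ, FreeUF U → FreeUF V →
    ∀ x y : ℕ → M, Bornology.IsBounded (Set.range x) → Bornology.IsBounded (Set.range y) →
      limUnder (U : Filter ℕ) (fun a => limUnder (V : Filter ℕ) (fun b => dist (x a) (y b)))
        = limUnder (V : Filter ℕ) (fun b => limUnder (U : Filter ℕ) (fun a => dist (x a) (y b)))

lemma even_gap {a b : ℕ} (ha : Even a) (hb : Even b) (h : a < b) : a + 2 ≤ b := by
  obtain ⟨x, rfl⟩ := ha; obtain ⟨y, rfl⟩ := hb; omega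

lemma auxIL {k : ℕ} (m n : Fin k → ℕ) (hm : StrictMono m) (hn : StrictMono n)
    (hme : ∀ i, Even (m i)) (h : InterLE m n) :
    ∃ p : Fin k → ℕ, StrictMono p ∧ StrongInterLE m p ∧ StrongInterLE p n := by
  refine ⟨fun i => min (m i + 1) (n i), ?_, ⟨?_, ?_⟩, ⟨?_, ?_⟩⟩
  · intro i j hij
    have hij' : i.1 < j.1 := hij
    have hj1 : j.1 - 1 + 1 < k := by have := j.isLt; omega
    have t1 : n i ≤ n ⟨j.1 - 1, Nat.lt_of_succ_lt hj1⟩ :=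
      hn.monotone (Nat.le_sub_one_of_lt hij')
    have t2 := h.2 (j.1 - 1) hj1
    have t3 : m ⟨j.1 - 1 + 1, hj1⟩ = m j := congrArg m (Fin.ext (by
      simp only [Fin.val_mk]; omega))
    have hnm : n i ≤ m j := t3 ▸ (t1.trans t2)
    exact lt_min (lt_of_le_of_lt (min_le_right _ _) (Nat.lt_succ_of_le hnm))
      (lt_of_le_of_lt (min_le_right _ _) (hn hij))
  · exact fun i => le_min (Nat.le_succ _) (h.1 i)
  · intro i hi
    have hg : m ⟨i, Nat.lt_of_succ_lt hi⟩ + 2 ≤ m ⟨i + 1, hi⟩ :=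
      even_gap (hme _) (hme _) (hm (by simp [Fin.lt_def]))
    exact lt_of_le_of_lt (min_le_left _ _) (by omega)
  · exact fun i => min_le_right _ _
  · intro i hi
    have h2 := h.2 i hi
    have h3 : n ⟨i, Nat.lt_of_succ_lt hi⟩ < n ⟨i + 1, hi⟩ := hn (by simp [Fin.lt_def])
    exact lt_min (by omega) h3

/-- Given `k ∈ ℕ` and an interlacing pair `(m̄, n̄)` in `[2ℕ]^k`, there exists
`p̄ ∈ [ℕ]^k` such that the pairs `(m̄, p̄)` and `(n̄, p̄)` are strongly interlacing. -/
theorem stmt0 (k : ℕ) (m n : Fin k → ℕ) (hm : StrictMono m) (hn : StrictMono n)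
    (hme : ∀ i, Even (m i)) (hne : ∀ i, Even (n i)) (h : Interlacing m n) :
    ∃ p : Fin k → ℕ, StrictMono p ∧ StronglyInterlacing m p ∧ StronglyInterlacing n p := by
  rcases h with h | h
  · obtain ⟨p, hp, h1, h2⟩ := auxIL m n hm hn hme h
    exact ⟨p, hp, Or.inl h1, Or.inr h2⟩
  · obtain ⟨p, hp, h1, h2⟩ := auxIL n m hn hm hne h
    exact ⟨p, hp, Or.inr h2, Or.inl h1⟩
end

section
/- Let f : [ℕ]^k → c₀ be defined by f(n̄) = Σ_{i=1}^k s_{n_i}, where (s_n) is the summing basis of c₀ (s_n = Σ_{i=1}^n e_i with (e_i) the unit vector basis). Then for all k-element subsets m̄, n̄ of ℕ, ‖f(m̄) − f(n̄)‖_∞ ≤ d_I(m̄, n̄) ≤ 2‖f(m̄) − f(n̄)‖_∞, and moreover ‖f(m̄) − f(n̄)‖_∞ = k whenever every element of m̄ is strictly less than every element of n̄. -/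
open Filter Topology
open scoped ZeroAtInfty ENNReal NNReal

namespace Stmt2Aux

/-- The count function `c_m(x) = #{i : x ≤ m i}`. -/
def cnt {k : ℕ} (m : Fin k → ℕ) (x : ℕ) : ℕ :=
  (Finset.univ.filter fun i => x ≤ m i).card

lemma cnt_le {k : ℕ} (m : Fin k → ℕ) (x : ℕ) : cnt m x ≤ k := by
  classical
  simpa [cnt] using (Finset.card_filter_le Finset.univ fun i => x ≤ m i).trans
    (by simp)

lemma mem_iff_of_upclosed {k : ℕ} (S : Finset (Fin k))
    (h : ∀ i j : Fin k, i ≤ j → i ∈ S → j ∈ S) (i : Fin k) :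
    i ∈ S ↔ k - S.card ≤ i.1 := by
  constructor
  · intro hi
    have hsub : Finset.Ici i ⊆ S := fun j hj => h i j (Finset.mem_Ici.mp hj) hi
    have hc := Finset.card_le_card hsub
    rw [Fin.card_Ici] at hc
    omega
  · intro hi
    by_contra hmem
    have hsub : S ⊆ Finset.Ioi i := by
      intro j hj
      rcases lt_or_ge i j with h' | h'
      · exact Finset.mem_Ioi.mpr h'
      · exact absurd (h j i h' hj) hmem
    have hc := Finset.card_le_card hsub
    rw [Fin.card_Ioi] at hc
    have := i.isLt
    omega

lemma cnt_thresh {k : ℕ} {m : Fin k → ℕ} (hm : StrictMono m) (x : ℕ) (i : Fin k) :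
    x ≤ m i ↔ k - cnt m x ≤ i.1 := by
  classical
  have := mem_iff_of_upclosed (Finset.univ.filter fun i => x ≤ m i)
    (fun a b hab ha => by
      simp only [Finset.mem_filter, Finset.mem_univ, true_and] at ha ⊢
      exact ha.trans (hm.monotone hab)) i
  simpa [cnt, Finset.mem_filter] using this

lemma eq_of_cnt_eq {k : ℕ} {m n : Fin k → ℕ} (hm : StrictMono m) (hn : StrictMono n)
    (h : ∀ x, cnt m x = cnt n x) : m = n := by
  funext i
  have h1 : m i ≤ n i := by
    have := (cnt_thresh hm (m i) i).mp le_rfl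
    rw [h (m i)] at this
    exact (cnt_thresh hn (m i) i).mpr this
  have h2 : n i ≤ m i := by
    have := (cnt_thresh hn (n i) i).mp le_rfl
    rw [← h (n i)] at this
    exact (cnt_thresh hm (n i) i).mpr this
  omega

lemma cnt_mono {k : ℕ} {m n : Fin k → ℕ} (h : ∀ i, m i ≤ n i) (x : ℕ) :
    cnt m x ≤ cnt n x := by
  classical
  exact Finset.card_le_card (fun i hi => by
    simp only [Finset.mem_filter, Finset.mem_univ, true_and] at hi ⊢
    exact hi.trans (h i))

lemma cnt_interLE {k : ℕ} {m n : Fin k → ℕ} (hm : StrictMono m) (hn : StrictMono n)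
    (h : InterLE m n) (x : ℕ) : cnt m x ≤ cnt n x ∧ cnt n x ≤ cnt m x + 1 := by
  refine ⟨cnt_mono h.1 x, ?_⟩
  rcases Nat.eq_zero_or_pos (cnt n x) with h0 | h0
  · omega
  have hcnk := cnt_le n x
  have hcmk := cnt_le m x
  have hik : k - cnt n x < k := by omega
  have hxn : x ≤ n ⟨k - cnt n x, hik⟩ := (cnt_thresh hn x _).mpr le_rfl
  rcases Nat.lt_or_ge (k - cnt n x + 1) k with hk | hk
  · have hxm : x ≤ m ⟨k - cnt n x + 1, hk⟩ := hxn.trans (h.2 _ hk)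
    have h3 : k - cnt m x ≤ k - cnt n x + 1 := (cnt_thresh hm x _).mp hxm
    omega
  · omega

/-- One step from `m` towards `n`. -/
def stepTo {k : ℕ} (m n : Fin k → ℕ) : Fin k → ℕ := fun i =>
  if m i < n i then
    if h : i.1 + 1 < k then min (n i) (m ⟨i.1 + 1, h⟩) else n i
  else m i

lemma le_stepTo {k : ℕ} {m : Fin k → ℕ} (n : Fin k → ℕ) (hm : StrictMono m) (i : Fin k) :
    m i ≤ stepTo m n i := by
  unfold stepTo
  split_ifs with h1 h2
  · exact le_min h1.le (hm (Fin.mk_lt_mk.mpr (by omega) : i < ⟨i.1 + 1, h2⟩)).le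
  · exact h1.le
  · exact le_rfl

lemma stepTo_le_next {k : ℕ} {m : Fin k → ℕ} (n : Fin k → ℕ) (hm : StrictMono m)
    (i : ℕ) (h : i + 1 < k) :
    stepTo m n ⟨i, Nat.lt_of_succ_lt h⟩ ≤ m ⟨i + 1, h⟩ := by
  unfold stepTo
  split_ifs with h1
  · simp only [h, dif_pos]
    exact min_le_right _ _
  · exact (hm (Fin.mk_lt_mk.mpr (by omega))).le

lemma stepTo_le_max {k : ℕ} {m n : Fin k → ℕ} (i : Fin k) :
    stepTo m n i ≤ max (m i) (n i) := by
  unfold stepTo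
  split_ifs with h1 h2
  · exact (min_le_left _ _).trans (le_max_right _ _)
  · exact le_max_right _ _
  · exact le_max_left _ _

lemma stepTo_le_of_lt {k : ℕ} {m n : Fin k → ℕ} {i : Fin k} (h : m i < n i) :
    stepTo m n i ≤ n i := by
  unfold stepTo
  rw [if_pos h]
  split_ifs with h2
  · exact min_le_left _ _
  · exact le_rfl

lemma strictMono_of_succ {k : ℕ} {f : Fin k → ℕ}
    (h : ∀ (i : ℕ) (hi : i + 1 < k), f ⟨i, Nat.lt_of_succ_lt hi⟩ < f ⟨i + 1, hi⟩) :
    StrictMono f := by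
  cases k with
  | zero => exact fun i => i.elim0
  | succ n =>
    rw [Fin.strictMono_iff_lt_succ]
    intro i
    exact h i.1 (by omega)

lemma stepTo_strictMono {k : ℕ} {m n : Fin k → ℕ} (hm : StrictMono m) (hn : StrictMono n) :
    StrictMono (stepTo m n) := by
  apply strictMono_of_succ
  intro i hi
  set i0 : Fin k := ⟨i, Nat.lt_of_succ_lt hi⟩ with hi0
  set i1 : Fin k := ⟨i + 1, hi⟩ with hi1
  show stepTo m n i0 < stepTo m n i1
  have hlt : i0 < i1 := Fin.mk_lt_mk.mpr (by omega)
  have hle : stepTo m n i0 ≤ m i1 := stepTo_le_next n hm i hi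
  rcases Nat.lt_or_ge (m i1) (n i1) with hc | hc
  · have : m i1 < stepTo m n i1 := by
      unfold stepTo
      rw [if_pos hc]
      split_ifs with h2
      · exact lt_min hc (hm (Fin.lt_def.mpr (Nat.lt_succ_self _)))
      · exact hc
    omega
  · have h1 : stepTo m n i1 = m i1 := by
      unfold stepTo
      rw [if_neg (by omega)]
    rw [h1]
    rcases Nat.lt_or_ge (m i0) (n i0) with hc0 | hc0
    · have h2 : stepTo m n i0 ≤ n i0 := stepTo_le_of_lt hc0
      have h3 : n i0 < n i1 := hn hlt
      omega
    · have h2 : stepTo m n i0 = m i0 := by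
        unfold stepTo
        rw [if_neg (by omega)]
      have h3 := hm hlt
      omega

lemma cnt_eq_of_thresh {k : ℕ} {u : Fin k → ℕ} (hu : StrictMono u) (x : ℕ) (c : ℕ)
    (hck : c ≤ k) (h : ∀ i : Fin k, x ≤ u i ↔ k - c ≤ i.1) : cnt u x = c := by
  have hcu := cnt_le u x
  rcases Nat.lt_trichotomy (cnt u x) c with hlt | heq | hgt
  · exfalso
    have hik : k - c < k := by omega
    have h1 : x ≤ u ⟨k - c, hik⟩ := (h _).mpr (by show k - c ≤ k - c; omega)
    have h2 : k - cnt u x ≤ k - c := (cnt_thresh hu x _).mp h1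
    omega
  · exact heq
  · exfalso
    have hik : k - cnt u x < k := by omega
    have h1 : x ≤ u ⟨k - cnt u x, hik⟩ :=
      (cnt_thresh hu x _).mpr (by show k - cnt u x ≤ k - cnt u x; omega)
    have h2 : k - c ≤ k - cnt u x := (h _).mp h1
    omega

lemma cnt_stepTo {k : ℕ} {m n : Fin k → ℕ} (hm : StrictMono m) (hn : StrictMono n) (x : ℕ) :
    cnt (stepTo m n) x = if cnt m x < cnt n x then cnt m x + 1 else cnt m x := by
  have hu := stepTo_strictMono hm hn
  have hcm := cnt_le m x
  have hcn := cnt_le n x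
  rcases Nat.lt_or_ge (cnt m x) (cnt n x) with hc | hc
  · rw [if_pos hc]
    apply cnt_eq_of_thresh hu x _ (by omega)
    intro i
    constructor
    · intro hxu
      by_contra hcon
      have hcon' : i.1 + 1 < k - cnt m x := by omega
      have hik : i.1 + 1 < k := by omega
      have h1 : stepTo m n i ≤ m ⟨i.1 + 1, hik⟩ := stepTo_le_next n hm i.1 hik
      have h2 : ¬ x ≤ m ⟨i.1 + 1, hik⟩ := fun hx => by
        have h3 : k - cnt m x ≤ i.1 + 1 := (cnt_thresh hm x ⟨i.1 + 1, hik⟩).mp hx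
        omega
      omega
    · intro hi
      rcases Nat.lt_or_ge i.1 (k - cnt m x) with hcase | hcase
      · have hmi : ¬ x ≤ m i := fun hx => by
          have := (cnt_thresh hm x i).mp hx; omega
        have hni : x ≤ n i := (cnt_thresh hn x i).mpr (by omega)
        have hmn : m i < n i := by omega
        unfold stepTo
        rw [if_pos hmn]
        split_ifs with h2
        · refine le_min hni ((cnt_thresh hm x ⟨i.1 + 1, h2⟩).mpr ?_)
          show k - cnt m x ≤ i.1 + 1
          omega
        · exact hni
      · exact ((cnt_thresh hm x i).mpr hcase).trans (le_stepTo n hm i)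
  · rw [if_neg (by omega)]
    apply cnt_eq_of_thresh hu x _ (by omega)
    intro i
    constructor
    · intro hxu
      by_contra hcon
      have hmi : ¬ x ≤ m i := fun hx => by
        have := (cnt_thresh hm x i).mp hx; omega
      have hni : ¬ x ≤ n i := fun hx => by
        have := (cnt_thresh hn x i).mp hx; omega
      have := stepTo_le_max (m := m) (n := n) i
      omega
    · intro hi
      exact ((cnt_thresh hm x i).mpr hi).trans (le_stepTo n hm i)

end Stmt2Aux

namespace Stmt2Aux

lemma c0norm_le {f : C₀(ℕ, ℝ)} {C : ℝ} (hC : 0 ≤ C) (h : ∀ x, |f x| ≤ C) : ‖f‖ ≤ C := by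
  rw [← ZeroAtInftyContinuousMap.norm_toBCF_eq_norm]
  exact (BoundedContinuousFunction.norm_le hC).mpr fun x => by
    simpa [Real.norm_eq_abs] using h x

lemma abs_apply_le_c0norm (f : C₀(ℕ, ℝ)) (x : ℕ) : |f x| ≤ ‖f‖ := by
  rw [← ZeroAtInftyContinuousMap.norm_toBCF_eq_norm]
  simpa [Real.norm_eq_abs] using f.toBCF.norm_coe_le_norm x

lemma interMap_apply {k : ℕ} (m : Fin k → ℕ) (x : ℕ) :
    interMap m x = (cnt m x : ℝ) := by
  classical
  have hsum : ∀ s : Finset (Fin k), ((∑ i ∈ s, summingBasis (m i)) : C₀(ℕ, ℝ)) x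
      = ∑ i ∈ s, (if x ≤ m i then (1 : ℝ) else 0) := by
    intro s
    induction s using Finset.cons_induction with
    | empty => simp
    | cons a s ha ih =>
      rw [Finset.sum_cons, Finset.sum_cons, ← ih]
      rw [ZeroAtInftyContinuousMap.add_apply]
      rfl
  have h0 : interMap m x = ((∑ i ∈ Finset.univ, summingBasis (m i)) : C₀(ℕ, ℝ)) x := rfl
  rw [h0, hsum, Finset.sum_boole, cnt]

lemma norm_interMap_sub_le {k : ℕ} (m n : Fin k → ℕ) {D : ℕ}
    (h : ∀ x, cnt m x ≤ cnt n x + D ∧ cnt n x ≤ cnt m x + D) :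
    ‖interMap m - interMap n‖ ≤ (D : ℝ) := by
  apply c0norm_le (Nat.cast_nonneg D)
  intro x
  rw [ZeroAtInftyContinuousMap.sub_apply, interMap_apply, interMap_apply, abs_sub_le_iff]
  constructor
  · have : (cnt m x : ℝ) ≤ cnt n x + D := by exact_mod_cast (h x).1
    linarith
  · have : (cnt n x : ℝ) ≤ cnt m x + D := by exact_mod_cast (h x).2
    linarith

lemma cnt_adj {k : ℕ} {m n : IncTuple k} (h : (interGraph k).Adj m n) (x : ℕ) :
    cnt m.1 x ≤ cnt n.1 x + 1 ∧ cnt n.1 x ≤ cnt m.1 x + 1 := by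
  rcases h.2 with h' | h'
  · have := cnt_interLE m.2 n.2 h' x; omega
  · have := cnt_interLE n.2 m.2 h' x; omega

lemma norm_le_walk {k : ℕ} {m n : IncTuple k} (p : (interGraph k).Walk m n) :
    ‖interMap m.1 - interMap n.1‖ ≤ (p.length : ℝ) := by
  induction p with
  | nil => simp
  | @cons a b c hadj p ih =>
    have h1 : ‖interMap a.1 - interMap b.1‖ ≤ (1 : ℝ) := by
      simpa using norm_interMap_sub_le a.1 b.1 (D := 1) (cnt_adj hadj)
    have h2 : ‖interMap a.1 - interMap c.1‖ ≤
        ‖interMap a.1 - interMap b.1‖ + ‖interMap b.1 - interMap c.1‖ := by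
      have := norm_add_le (interMap a.1 - interMap b.1) (interMap b.1 - interMap c.1)
      simpa using this
    rw [SimpleGraph.Walk.length_cons]
    push_cast
    linarith

lemma cnt_step_bound {k : ℕ} {m n : Fin k → ℕ} (hm : StrictMono m) (hn : StrictMono n)
    {D : ℕ} (h : ∀ x, cnt m x ≤ cnt n x + (D + 1) ∧ cnt n x ≤ cnt m x + (D + 1)) (x : ℕ) :
    cnt (stepTo m n) x ≤ cnt (stepTo n m) x + D ∧
      cnt (stepTo n m) x ≤ cnt (stepTo m n) x + D := by
  have h1 := cnt_stepTo hm hn x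
  have h2 := cnt_stepTo hn hm x
  have h3 := h x
  rw [h1, h2]
  split_ifs <;> omega

lemma walk_prepend {k : ℕ} {m u n : IncTuple k} (h : InterLE m.1 u.1)
    (p : (interGraph k).Walk u n) :
    ∃ q : (interGraph k).Walk m n, q.length ≤ p.length + 1 := by
  by_cases hmu : m = u
  · subst hmu; exact ⟨p, Nat.le_succ _⟩
  · exact ⟨SimpleGraph.Walk.cons ⟨hmu, Or.inl h⟩ p, le_of_eq (SimpleGraph.Walk.length_cons ..)⟩

lemma walk_append {k : ℕ} {m v n : IncTuple k} (h : InterLE n.1 v.1)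
    (p : (interGraph k).Walk m v) :
    ∃ q : (interGraph k).Walk m n, q.length ≤ p.length + 1 := by
  by_cases hnv : n = v
  · subst hnv; exact ⟨p, Nat.le_succ _⟩
  · refine ⟨p.concat ⟨fun hh => hnv hh.symm, Or.inr h⟩, ?_⟩
    exact le_of_eq (SimpleGraph.Walk.length_concat ..)

lemma exists_walk {k : ℕ} : ∀ (D : ℕ) (m n : IncTuple k),
    (∀ x, cnt m.1 x ≤ cnt n.1 x + D ∧ cnt n.1 x ≤ cnt m.1 x + D) →
    ∃ p : (interGraph k).Walk m n, p.length ≤ 2 * D := by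
  intro D
  induction D with
  | zero =>
    intro m n h
    have hmn : m = n := Subtype.ext (eq_of_cnt_eq m.2 n.2 (fun x => by have := h x; omega))
    subst hmn
    exact ⟨SimpleGraph.Walk.nil, by simp⟩
  | succ D ih =>
    intro m n h
    obtain ⟨p, hp⟩ := ih ⟨stepTo m.1 n.1, stepTo_strictMono m.2 n.2⟩
      ⟨stepTo n.1 m.1, stepTo_strictMono n.2 m.2⟩ (cnt_step_bound m.2 n.2 h)
    have hadj2 : InterLE n.1 (stepTo n.1 m.1) :=
      ⟨le_stepTo m.1 n.2, stepTo_le_next m.1 n.2⟩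
    have hadj1 : InterLE m.1 (stepTo m.1 n.1) :=
      ⟨le_stepTo n.1 m.2, stepTo_le_next n.1 m.2⟩
    obtain ⟨q, hq⟩ := walk_append (n := n) hadj2 p
    obtain ⟨r, hr⟩ := walk_prepend (m := m) hadj1 q
    exact ⟨r, by omega⟩

lemma cnt_le_of_abs {a b : ℕ} {r : ℝ} (h : |(a : ℝ) - b| ≤ r) : a ≤ b + ⌊r⌋₊ := by
  by_cases hc : a ≤ b
  · omega
  · have h1 : ((a - b : ℕ) : ℝ) ≤ r := by
      rw [Nat.cast_sub (by omega)]
      have := (abs_le.mp h).2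
      linarith
    have := Nat.le_floor h1
    omega

end Stmt2Aux

/-- The summing-basis map `f(n̄) = Σᵢ s_{nᵢ}` into `c₀` satisfies
`‖f(m̄) − f(n̄)‖ ≤ d_I(m̄, n̄) ≤ 2‖f(m̄) − f(n̄)‖`, and `‖f(m̄) − f(n̄)‖ = k` whenever
every element of `m̄` is strictly below every element of `n̄`. -/
theorem stmt2 (k : ℕ) (m n : IncTuple k) :
    ‖interMap m.1 - interMap n.1‖ ≤ (dI m n : ℝ) ∧
    (dI m n : ℝ) ≤ 2 * ‖interMap m.1 - interMap n.1‖ ∧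
    (ordLT m n → ‖interMap m.1 - interMap n.1‖ = k) := by
  classical
  open Stmt2Aux in
  have happly : ∀ x : ℕ, (interMap m.1 - interMap n.1) x
      = (cnt m.1 x : ℝ) - (cnt n.1 x : ℝ) := by
    intro x
    rw [ZeroAtInftyContinuousMap.sub_apply, interMap_apply, interMap_apply]
  have hk : ∀ x, Stmt2Aux.cnt m.1 x ≤ Stmt2Aux.cnt n.1 x + k ∧
      Stmt2Aux.cnt n.1 x ≤ Stmt2Aux.cnt m.1 x + k := fun x => by
    have h1 := Stmt2Aux.cnt_le m.1 x
    have h2 := Stmt2Aux.cnt_le n.1 x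
    omega
  obtain ⟨p0, _⟩ := Stmt2Aux.exists_walk k m n hk
  refine ⟨?_, ?_, ?_⟩
  · obtain ⟨p, hp⟩ := p0.reachable.exists_walk_length_eq_dist
    calc ‖interMap m.1 - interMap n.1‖ ≤ (p.length : ℝ) := Stmt2Aux.norm_le_walk p
    _ = (dI m n : ℝ) := by rw [hp]; rfl
  · set D : ℕ := ⌊‖interMap m.1 - interMap n.1‖⌋₊ with hD
    have hb : ∀ x, Stmt2Aux.cnt m.1 x ≤ Stmt2Aux.cnt n.1 x + D ∧
        Stmt2Aux.cnt n.1 x ≤ Stmt2Aux.cnt m.1 x + D := by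
      intro x
      have habs := Stmt2Aux.abs_apply_le_c0norm (interMap m.1 - interMap n.1) x
      rw [happly x] at habs
      refine ⟨Stmt2Aux.cnt_le_of_abs habs, Stmt2Aux.cnt_le_of_abs ?_⟩
      rw [abs_sub_comm] at habs
      exact habs
    obtain ⟨q, hq⟩ := Stmt2Aux.exists_walk D m n hb
    have hd : (interGraph k).dist m n ≤ 2 * D := (SimpleGraph.dist_le q).trans hq
    have hd' : (dI m n : ℝ) ≤ 2 * (D : ℝ) := by
      have : dI m n ≤ 2 * D := hd
      exact_mod_cast this
    have hfl : (D : ℝ) ≤ ‖interMap m.1 - interMap n.1‖ :=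
      Nat.floor_le (norm_nonneg _)
    linarith
  · intro hlt
    rcases Nat.eq_zero_or_pos k with hk0 | hk0
    · subst hk0
      have h0 : interMap m.1 - interMap n.1 = 0 := by
        have hm0 : interMap m.1 = 0 := by
          rw [interMap]; exact Finset.sum_empty
        have hn0 : interMap n.1 = 0 := by
          rw [interMap]; exact Finset.sum_empty
        rw [hm0, hn0, sub_zero]
      rw [h0, norm_zero, Nat.cast_zero]
    · apply le_antisymm
      · apply Stmt2Aux.c0norm_le (Nat.cast_nonneg k)
        intro x
        rw [happly x, abs_sub_le_iff]
        have h1 := Stmt2Aux.cnt_le m.1 x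
        have h2 := Stmt2Aux.cnt_le n.1 x
        constructor
        · have ha : (Stmt2Aux.cnt m.1 x : ℝ) ≤ k := by exact_mod_cast h1
          have hb : (0 : ℝ) ≤ (Stmt2Aux.cnt n.1 x : ℝ) := Nat.cast_nonneg _
          linarith
        · have ha : (Stmt2Aux.cnt n.1 x : ℝ) ≤ k := by exact_mod_cast h2
          have hb : (0 : ℝ) ≤ (Stmt2Aux.cnt m.1 x : ℝ) := Nat.cast_nonneg _
          linarith
      · set i0 : Fin k := ⟨k - 1, by omega⟩ with hi0
        set x : ℕ := m.1 i0 + 1 with hx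
        have h1 : Stmt2Aux.cnt m.1 x = 0 := by
          rw [Stmt2Aux.cnt, Finset.card_eq_zero, Finset.filter_eq_empty_iff]
          intro i _
          have hle : m.1 i ≤ m.1 i0 := m.2.monotone (by
            rw [Fin.le_def]
            have := i.isLt
            show i.1 ≤ k - 1
            omega)
          omega
        have h2 : Stmt2Aux.cnt n.1 x = k := by
          rw [Stmt2Aux.cnt, Finset.filter_true_of_mem, Finset.card_univ, Fintype.card_fin]
          intro i _
          have := hlt i0 i
          omega
        have habs := Stmt2Aux.abs_apply_le_c0norm (interMap m.1 - interMap n.1) x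
        rw [happly x, h1, h2] at habs
        calc (k : ℝ) = |(0 : ℝ) - (k : ℝ)| := by
              rw [zero_sub, abs_neg, abs_of_nonneg (Nat.cast_nonneg k)]
        _ ≤ ‖interMap m.1 - interMap n.1‖ := by
              simpa using habs
end

section
/- For any two adjacent vertices m̄, n̄ in the interlacing graph on [ℕ]^k, the map f(n̄) = Σ_{i=1}^k s_{n_i} into c₀ satisfies ‖f(m̄) − f(n̄)‖_∞ = 1; hence f is 1-Lipschitz from ([ℕ]^k, d_I) to c₀. -/
open Filter Topology
open scoped ZeroAtInfty ENNReal NNReal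

/-! ### Auxiliary lemmas for `stmt3` -/

noncomputable def c0coe : C₀(ℕ, ℝ) →+ (ℕ → ℝ) where
  toFun f := ⇑f
  map_zero' := rfl
  map_add' _ _ := rfl

theorem interMap_apply {k : ℕ} (m : Fin k → ℕ) (x : ℕ) :
    interMap m x = ∑ i : Fin k, if x ≤ m i then (1:ℝ) else 0 := by
  rw [interMap]
  show c0coe (∑ i : Fin k, summingBasis (m i)) x = _
  rw [map_sum, Finset.sum_apply]
  rfl

theorem interMap_mono {k : ℕ} {m n : Fin k → ℕ} (h : InterLE m n) (x : ℕ) :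
    interMap m x ≤ interMap n x := by
  rw [interMap_apply, interMap_apply]
  refine Finset.sum_le_sum fun i _ => ?_
  by_cases hx : x ≤ m i
  · rw [if_pos hx, if_pos (hx.trans (h.1 i))]
  · rw [if_neg hx]
    by_cases hx' : x ≤ n i <;> simp [hx']

theorem interMap_le_add_one {k : ℕ} {m n : Fin k → ℕ} (h : InterLE m n) (x : ℕ) :
    interMap n x ≤ interMap m x + 1 := by
  rw [interMap_apply, interMap_apply]
  cases k with
  | zero => simp
  | succ k' =>
    rw [Fin.sum_univ_castSucc (f := fun j => if x ≤ n j then (1:ℝ) else 0),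
        Fin.sum_univ_succ (f := fun j => if x ≤ m j then (1:ℝ) else 0)]
    have h1 : ∑ j : Fin k', (if x ≤ n j.castSucc then (1:ℝ) else 0)
        ≤ ∑ j : Fin k', (if x ≤ m j.succ then (1:ℝ) else 0) := by
      refine Finset.sum_le_sum fun j _ => ?_
      by_cases hx : x ≤ n j.castSucc
      · have hle : n j.castSucc ≤ m j.succ := by
          have := h.2 j.1 (by omega)
          convert this using 2 <;> exact Fin.ext rfl
        rw [if_pos hx, if_pos (hx.trans hle)]
      · rw [if_neg hx]
        by_cases hx' : x ≤ m j.succ <;> simp [hx']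
    have h2 : (if x ≤ n (Fin.last k') then (1:ℝ) else 0) ≤ 1 := by
      by_cases hx : x ≤ n (Fin.last k') <;> simp [hx]
    have h3 : (0:ℝ) ≤ if x ≤ m 0 then (1:ℝ) else 0 := by
      by_cases hx : x ≤ m 0 <;> simp [hx]
    linarith

theorem interMap_jump {k : ℕ} {m n : Fin k → ℕ} (hm : StrictMono m) (hn : StrictMono n)
    (h : InterLE m n) {i : Fin k} (hi : m i < n i) :
    interMap n (n i) = interMap m (n i) + 1 := by
  rw [interMap_apply, interMap_apply]
  have key : ∀ j : Fin k,
      (if n i ≤ n j then (1:ℝ) else 0) - (if n i ≤ m j then (1:ℝ) else 0)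
        = if j = i then 1 else 0 := by
    intro j
    rcases lt_trichotomy j i with hj | hj | hj
    · have h1 : ¬ n i ≤ n j := not_le.2 (hn hj)
      have h2 : ¬ n i ≤ m j := not_le.2 (lt_of_le_of_lt (h.1 j) (hn hj))
      rw [if_neg h1, if_neg h2, if_neg hj.ne]
      norm_num
    · subst hj
      rw [if_pos le_rfl, if_neg (not_le.2 hi), if_pos rfl]
      norm_num
    · have h1 : n i ≤ n j := (hn hj).le
      have hik : i.1 + 1 < k := lt_of_le_of_lt hj j.isLt
      have h2 : n i ≤ m j := by
        have hstep := h.2 i.1 hik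
        have e1 : (⟨i.1, Nat.lt_of_succ_lt hik⟩ : Fin k) = i := by ext; rfl
        rw [e1] at hstep
        refine hstep.trans (hm.monotone ?_)
        rw [Fin.le_def]
        exact hj
      rw [if_pos h1, if_pos h2, if_neg hj.ne']
      norm_num
  have : ∑ j : Fin k, ((if n i ≤ n j then (1:ℝ) else 0) - (if n i ≤ m j then (1:ℝ) else 0))
      = 1 := by
    rw [Finset.sum_congr rfl (fun j _ => key j), Finset.sum_ite_eq' Finset.univ i (fun _ => (1:ℝ)),
      if_pos (Finset.mem_univ i)]
  rw [Finset.sum_sub_distrib] at this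
  linarith

theorem norm_c0_le_one (f : C₀(ℕ, ℝ)) (h : ∀ x, ‖f x‖ ≤ 1) : ‖f‖ ≤ 1 := by
  rw [← ZeroAtInftyContinuousMap.norm_toBCF_eq_norm]
  exact (BoundedContinuousFunction.norm_le zero_le_one).2 h

theorem norm_c0_apply_le (f : C₀(ℕ, ℝ)) (x : ℕ) : ‖f x‖ ≤ ‖f‖ := by
  rw [← ZeroAtInftyContinuousMap.norm_toBCF_eq_norm]
  exact f.toBCF.norm_coe_le_norm x

theorem norm_eq_one_of_interLE {k : ℕ} {m n : Fin k → ℕ} (hm : StrictMono m)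
    (hn : StrictMono n) (h : InterLE m n) (hne : m ≠ n) :
    ‖interMap n - interMap m‖ = 1 := by
  obtain ⟨i, hi0⟩ := Function.ne_iff.1 hne
  have hi : m i < n i := lt_of_le_of_ne (h.1 i) hi0
  refine le_antisymm (norm_c0_le_one _ fun x => ?_) ?_
  · have e : (interMap n - interMap m) x = interMap n x - interMap m x := rfl
    rw [e, Real.norm_eq_abs, abs_le]
    have h1 := interMap_mono h x
    have h2 := interMap_le_add_one h x
    constructor <;> linarith
  · have e : (interMap n - interMap m) (n i) = interMap n (n i) - interMap m (n i) := rfl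
    have hv : (interMap n - interMap m) (n i) = 1 := by
      rw [e, interMap_jump hm hn h hi]; ring
    calc (1:ℝ) = ‖(interMap n - interMap m) (n i)‖ := by rw [hv]; simp
    _ ≤ ‖interMap n - interMap m‖ := norm_c0_apply_le _ _

theorem adj_norm_eq_one {k : ℕ} {m n : IncTuple k} (h : (interGraph k).Adj m n) :
    ‖interMap m.1 - interMap n.1‖ = 1 := by
  obtain ⟨hne, hint⟩ : m ≠ n ∧ Interlacing m.1 n.1 := h
  have hne' : m.1 ≠ n.1 := fun he => hne (Subtype.ext he)
  rcases hint with h' | h'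
  · rw [norm_sub_rev]
    exact norm_eq_one_of_interLE m.2 n.2 h' hne'
  · exact norm_eq_one_of_interLE n.2 m.2 h' hne'.symm

/-- Concatenation of two tuples as a sequence. -/
def iseq (k : ℕ) (m b : Fin k → ℕ) (j : ℕ) : ℕ :=
  if h : j < k then m ⟨j, h⟩ else if h2 : j - k < k then b ⟨j - k, h2⟩ else 0

theorem iseq_lt {k : ℕ} {m b : Fin k → ℕ} (hm : StrictMono m) (hb : StrictMono b)
    (hlt : ∀ i j, m i < b j) {j j' : ℕ} (h : j < j') (h2 : j' < 2 * k) :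
    iseq k m b j < iseq k m b j' := by
  unfold iseq
  rcases lt_or_ge j k with hj | hj
  · rcases lt_or_ge j' k with hj' | hj'
    · rw [dif_pos hj, dif_pos hj']
      exact hm (Fin.mk_lt_mk.2 h)
    · rw [dif_pos hj, dif_neg (show ¬ j' < k from not_lt.2 hj'),
        dif_pos (show j' - k < k by omega)]
      exact hlt _ _
  · rw [dif_neg (show ¬ j < k from not_lt.2 hj), dif_pos (show j - k < k by omega),
      dif_neg (show ¬ j' < k by omega), dif_pos (show j' - k < k by omega)]
    exact hb (Fin.mk_lt_mk.2 (by omega))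

/-- The `t`-th shift of `m` towards `b`. -/
def ichain (k : ℕ) (m b : Fin k → ℕ) (t : ℕ) : Fin k → ℕ := fun i => iseq k m b (i.1 + t)

theorem ichain_strictMono {k : ℕ} {m b : Fin k → ℕ} (hm : StrictMono m) (hb : StrictMono b)
    (hlt : ∀ i j, m i < b j) {t : ℕ} (ht : t ≤ k) : StrictMono (ichain k m b t) := by
  intro i j hij
  have hj := j.isLt
  exact iseq_lt hm hb hlt (by omega : i.1 + t < j.1 + t) (by omega)

theorem ichain_zero {k : ℕ} (m b : Fin k → ℕ) : ichain k m b 0 = m := by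
  funext i
  have hi := i.isLt
  simp only [ichain, iseq, Nat.add_zero, dif_pos hi]

theorem ichain_last {k : ℕ} (m b : Fin k → ℕ) : ichain k m b k = b := by
  funext i
  have hi := i.isLt
  simp only [ichain, iseq]
  rw [dif_neg (show ¬ i.1 + k < k by omega), dif_pos (show i.1 + k - k < k by omega)]
  exact congrArg b (Fin.ext (show i.1 + k - k = i.1 by omega))

theorem ichain_adj {k : ℕ} {m b : Fin k → ℕ} (hm : StrictMono m) (hb : StrictMono b)
    (hlt : ∀ i j, m i < b j) {t : ℕ} (ht : t + 1 ≤ k) :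
    InterLE (ichain k m b t) (ichain k m b (t + 1)) ∧
      ichain k m b t ⟨0, by omega⟩ < ichain k m b (t + 1) ⟨0, by omega⟩ := by
  have hle : ∀ i : Fin k, ichain k m b t i < ichain k m b (t + 1) i := by
    intro i
    have hi := i.isLt
    exact iseq_lt hm hb hlt (by omega) (by omega)
  refine ⟨⟨fun i => (hle i).le, fun i h => ?_⟩, hle _⟩
  have : (⟨i, Nat.lt_of_succ_lt h⟩ : Fin k).1 + (t + 1) = (⟨i + 1, h⟩ : Fin k).1 + t := by
    simp; omega
  exact le_of_eq (congrArg (iseq k m b) this)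

theorem reach_chain {k : ℕ} {m b : Fin k → ℕ} (hm : StrictMono m) (hb : StrictMono b)
    (hlt : ∀ i j, m i < b j) :
    ∀ t (ht : t ≤ k), (interGraph k).Reachable ⟨m, hm⟩
      ⟨ichain k m b t, ichain_strictMono hm hb hlt ht⟩ := by
  intro t
  induction t with
  | zero =>
    intro ht
    have : (⟨ichain k m b 0, ichain_strictMono hm hb hlt ht⟩ : IncTuple k) = ⟨m, hm⟩ :=
      Subtype.ext (ichain_zero m b)
    rw [this]
    exact SimpleGraph.Reachable.refl _
  | succ t ih =>
    intro ht
    refine (ih (by omega)).trans (SimpleGraph.Adj.reachable ?_)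
    obtain ⟨hIL, hlt0⟩ := ichain_adj hm hb hlt ht
    refine (⟨fun he => ?_, Or.inl hIL⟩ : _ ≠ _ ∧ _)
    have := congrFun (congrArg Subtype.val he) ⟨0, by omega⟩
    exact hlt0.ne this

theorem inter_reachable {k : ℕ} (m n : IncTuple k) : (interGraph k).Reachable m n := by
  rcases Nat.eq_zero_or_pos k with hk | hk
  · subst hk
    have : m = n := Subtype.ext (funext fun i => i.elim0)
    rw [this]
  · set N := (Finset.univ.sup m.1) + (Finset.univ.sup n.1) + 1 with hN
    set b : Fin k → ℕ := fun i => N + i.1 with hbdef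
    have hb : StrictMono b := by
      intro i j hij
      have : i.1 < j.1 := hij
      simp only [hbdef]
      omega
    have hltm : ∀ i j, m.1 i < b j := by
      intro i j
      have h1 : m.1 i ≤ Finset.univ.sup m.1 := Finset.le_sup (Finset.mem_univ i)
      simp only [hbdef]
      omega
    have hltn : ∀ i j, n.1 i < b j := by
      intro i j
      have h1 : n.1 i ≤ Finset.univ.sup n.1 := Finset.le_sup (Finset.mem_univ i)
      simp only [hbdef]
      omega
    have r1 := reach_chain m.2 hb hltm k le_rfl
    have r2 := reach_chain n.2 hb hltn k le_rfl
    have e1 : (⟨ichain k m.1 b k, ichain_strictMono m.2 hb hltm le_rfl⟩ : IncTuple k)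
        = ⟨b, hb⟩ := Subtype.ext (ichain_last m.1 b)
    have e2 : (⟨ichain k n.1 b k, ichain_strictMono n.2 hb hltn le_rfl⟩ : IncTuple k)
        = ⟨b, hb⟩ := Subtype.ext (ichain_last n.1 b)
    rw [e1] at r1
    rw [e2] at r2
    have hm' : (⟨m.1, m.2⟩ : IncTuple k) = m := rfl
    have hn' : (⟨n.1, n.2⟩ : IncTuple k) = n := rfl
    rw [hm'] at r1
    rw [hn'] at r2
    exact r1.trans r2.symm

theorem walk_norm_bound {k : ℕ} {m n : IncTuple k} (p : (interGraph k).Walk m n) :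
    ‖interMap m.1 - interMap n.1‖ ≤ (p.length : ℝ) := by
  induction p with
  | nil => simp
  | @cons u v w h q ih =>
    have h1 : ‖interMap u.1 - interMap v.1‖ = 1 := adj_norm_eq_one h
    have h2 : interMap u.1 - interMap w.1
        = (interMap u.1 - interMap v.1) + (interMap v.1 - interMap w.1) :=
      (sub_add_sub_cancel _ _ _).symm
    calc ‖interMap u.1 - interMap w.1‖
        ≤ ‖interMap u.1 - interMap v.1‖ + ‖interMap v.1 - interMap w.1‖ := by
          rw [h2]; exact norm_add_le _ _
      _ ≤ 1 + (q.length : ℝ) := by rw [h1]; linarith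
      _ = ((q.cons h).length : ℝ) := by simp [SimpleGraph.Walk.length_cons]; ring

/-- For adjacent vertices of the interlacing graph, the summing-basis map
`f(n̄) = Σᵢ s_{nᵢ}` into `c₀` satisfies `‖f(m̄) − f(n̄)‖ = 1`; hence `f` is
`1`-Lipschitz from `([ℕ]^k, d_I)` to `c₀`. -/
theorem stmt3 (k : ℕ) :
    (∀ m n : IncTuple k, (interGraph k).Adj m n → ‖interMap m.1 - interMap n.1‖ = 1) ∧
    (∀ m n : IncTuple k, ‖interMap m.1 - interMap n.1‖ ≤ (dI m n : ℝ)) := by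
  constructor
  · intro m n h
    exact adj_norm_eq_one h
  · intro m n
    obtain ⟨p, hp⟩ := (inter_reachable m n).exists_walk_length_eq_dist
    rw [dI, ← hp]
    exact walk_norm_bound p
end

section
/- For any infinite-dimensional Banach space X, the property Q modulus satisfies q_X ≤ 1. More precisely, for any δ > 1 there exists a map f : ℕ → X such that 1 < ‖f(m) − f(n)‖ < δ for all m < n; consequently X fails the Q(1, δ)-property for every δ > 1. -/
open Filter Topology
open scoped ZeroAtInfty ENNReal NNReal

/-- Any two distinct increasing 1-tuples are adjacent in the interlacing graph. -/
lemma adj_of_ne_one {m n : IncTuple 1} (h : m ≠ n) : (interGraph 1).Adj m n := by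
  refine ⟨h, ?_⟩
  rcases le_total (m.1 0) (n.1 0) with hle | hle
  · exact Or.inl ⟨fun i => by rw [Subsingleton.elim i 0]; exact hle, fun i hi => by omega⟩
  · exact Or.inr ⟨fun i => by rw [Subsingleton.elim i 0]; exact hle, fun i hi => by omega⟩

/-- In an infinite-dimensional real Banach space, for every `δ > 1` there is a sequence
whose pairwise distances lie strictly between `1` and `δ`. -/
lemma exists_almost_equilateral (X : Type*) [NormedAddCommGroup X] [NormedSpace ℝ X]
    [CompleteSpace X] (hX : ¬ FiniteDimensional ℝ X) {δ : ℝ} (hδ : 1 < δ) :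
    ∃ f : ℕ → X, ∀ m n : ℕ, m < n → 1 < ‖f m - f n‖ ∧ ‖f m - f n‖ < δ := by
  obtain ⟨R, x, hR1, hxR, hsep⟩ := exists_seq_norm_le_one_le_norm_sub (𝕜 := ℝ) hX
  -- a nonprincipal ultrafilter on ℕ
  obtain ⟨U, hU⟩ := Filter.exists_ultrafilter_le (Filter.cofinite (α := ℕ))
  set d : ℕ → ℕ → ℝ := fun m n => ‖x m - x n‖ with hd
  have hdmem : ∀ m n : ℕ, m ≠ n → d m n ∈ Set.Icc (1 : ℝ) (2 * R) := by
    intro m n hmn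
    refine ⟨hsep hmn, ?_⟩
    calc ‖x m - x n‖ ≤ ‖x m‖ + ‖x n‖ := norm_sub_le _ _
      _ ≤ 2 * R := by have := hxR m; have := hxR n; linarith
  -- ultrafilter limits of distances
  have hlim : ∀ m : ℕ, ∃ L ∈ Set.Icc (1 : ℝ) (2 * R), Filter.Tendsto (d m) U (𝓝 L) := by
    intro m
    have hmemU : Set.Icc (1 : ℝ) (2 * R) ∈ Ultrafilter.map (d m) U := by
      rw [Ultrafilter.mem_map]
      have h1 : {n : ℕ | n ≠ m} ∈ U := hU (by simp [Filter.mem_cofinite])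
      refine Filter.mem_of_superset h1 ?_
      intro n hn
      exact hdmem m n (Ne.symm hn)
    obtain ⟨L, hL, hle⟩ := isCompact_Icc.ultrafilter_le_nhds' (Ultrafilter.map (d m) U) hmemU
    exact ⟨L, hL, hle⟩
  choose ℓ hℓIcc hℓt using hlim
  have hlim2 : ∃ L ∈ Set.Icc (1 : ℝ) (2 * R), Filter.Tendsto ℓ U (𝓝 L) := by
    have hmemU : Set.Icc (1 : ℝ) (2 * R) ∈ Ultrafilter.map ℓ U := by
      rw [Ultrafilter.mem_map]
      exact Filter.univ_mem' fun n => hℓIcc n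
    obtain ⟨L, hL, hle⟩ := isCompact_Icc.ultrafilter_le_nhds' (Ultrafilter.map ℓ U) hmemU
    exact ⟨L, hL, hle⟩
  obtain ⟨L, hLIcc, hLt⟩ := hlim2
  have hL1 : 1 ≤ L := hLIcc.1
  set ε : ℝ := (δ - 1) / (2 * (δ + 1)) with hε
  have hε0 : 0 < ε := by
    apply div_pos <;> nlinarith
  have hεhalf : ε < 1 / 2 := by
    rw [hε, div_lt_div_iff₀] <;> nlinarith
  have hLε : 0 < L - ε := by linarith
  have hkey : L + ε < δ * (L - ε) := by
    have h2 : ε * (1 + δ) = (δ - 1) / 2 := by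
      rw [hε, div_mul_eq_mul_div, div_eq_div_iff (ne_of_gt (by linarith)) (by norm_num)]; ring
    nlinarith [mul_le_mul_of_nonneg_left hL1 (le_of_lt (by linarith : (0:ℝ) < δ - 1))]
  -- extract an almost equilateral subsequence
  have hseq : ∃ a : ℕ → ℕ, (∀ n, |ℓ (a n) - L| < ε / 2) ∧
      ∀ m n, m < n → |d (a m) (a n) - L| < ε := by
    apply exists_seq_of_forall_finset_exists (fun m => |ℓ m - L| < ε / 2)
      (fun m n => |d m n - L| < ε)
    intro s hs
    have h1 : ∀ᶠ y in (U : Filter ℕ), |ℓ y - L| < ε / 2 := by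
      have := Metric.tendsto_nhds.mp hLt (ε / 2) (by linarith)
      simpa [Real.dist_eq] using this
    have h2 : ∀ᶠ y in (U : Filter ℕ), ∀ m ∈ s, |d m y - ℓ m| < ε / 2 := by
      rw [Filter.eventually_all_finset]
      intro m hm
      have := Metric.tendsto_nhds.mp (hℓt m) (ε / 2) (by linarith)
      simpa [Real.dist_eq] using this
    obtain ⟨y, hy1, hy2⟩ := (h1.and h2).exists
    refine ⟨y, hy1, fun m hm => ?_⟩
    have := hs m hm
    calc |d m y - L| ≤ |d m y - ℓ m| + |ℓ m - L| := abs_sub_le _ _ _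
      _ < ε / 2 + ε / 2 := add_lt_add (hy2 m hm) this
      _ = ε := by ring
  obtain ⟨a, _, ha⟩ := hseq
  refine ⟨fun n => (L - ε)⁻¹ • x (a n), fun m n hmn => ?_⟩
  have hd' := ha m n hmn
  have hdl : L - ε < d (a m) (a n) := by
    have := abs_lt.mp hd'; linarith [this.1]
  have hdu : d (a m) (a n) < L + ε := by
    have := abs_lt.mp hd'; linarith [this.2]
  have hnorm : ‖(L - ε)⁻¹ • x (a m) - (L - ε)⁻¹ • x (a n)‖ = (L - ε)⁻¹ * d (a m) (a n) := by
    rw [← smul_sub, norm_smul, Real.norm_eq_abs, abs_of_pos (by positivity)]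
  rw [hnorm]
  constructor
  · rw [show (1 : ℝ) = (L - ε)⁻¹ * (L - ε) by field_simp]
    exact mul_lt_mul_of_pos_left hdl (by positivity)
  · have : (L - ε)⁻¹ * d (a m) (a n) < (L - ε)⁻¹ * (L + ε) :=
      mul_lt_mul_of_pos_left hdu (by positivity)
    have h2 : (L - ε)⁻¹ * (L + ε) < δ := by
      rw [inv_mul_lt_iff₀ hLε]
      linarith [hkey]
    linarith

/-- For an infinite-dimensional Banach space `X`, `q_X ≤ 1`: for every `δ > 1` there is
`f : ℕ → X` with `1 < ‖f m − f n‖ < δ` for all `m < n`, and consequently `X` fails the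
`Q(1, δ)`-property for every `δ > 1`. -/
theorem stmt4 (X : Type*) [NormedAddCommGroup X] [NormedSpace ℝ X] [CompleteSpace X]
    (hX : ¬ FiniteDimensional ℝ X) :
    qMod X ≤ 1 ∧
    ∀ δ : ℝ, 1 < δ →
      (∃ f : ℕ → X, ∀ m n : ℕ, m < n → 1 < ‖f m - f n‖ ∧ ‖f m - f n‖ < δ) ∧
      ¬ HasQProp X 1 δ := by
  have main : ∀ δ : ℝ, 1 < δ →
      (∃ f : ℕ → X, ∀ m n : ℕ, m < n → 1 < ‖f m - f n‖ ∧ ‖f m - f n‖ < δ) ∧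
      ¬ HasQProp X 1 δ := by
    intro δ hδ
    obtain ⟨f, hf⟩ := exists_almost_equilateral X hX hδ
    refine ⟨⟨f, hf⟩, ?_⟩
    intro hQ
    set F : IncTuple 1 → X := fun m => f (m.1 0) with hF
    have hdistf : ∀ p q : ℕ, p ≠ q → 1 < ‖f p - f q‖ ∧ ‖f p - f q‖ < δ := by
      intro p q hpq
      rcases hpq.lt_or_gt with h | h
      · exact hf p q h
      · have := hf q p h
        rwa [← norm_neg, neg_sub] at this
    have hlip : ∀ m n : IncTuple 1, dist (F m) (F n) ≤ δ * dI m n := by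
      intro m n
      by_cases hmn : m = n
      · subst hmn
        simp only [dist_self]
        exact mul_nonneg (by linarith) (Nat.cast_nonneg _)
      · have hadj : (interGraph 1).Adj m n := adj_of_ne_one hmn
        have hdI : dI m n = 1 := (SimpleGraph.dist_eq_one_iff_adj).mpr hadj
        rw [hdI]
        have hne : m.1 0 ≠ n.1 0 := by
          intro h
          apply hmn
          apply Subtype.ext
          funext i
          rw [Subsingleton.elim i 0, h]
        have := (hdistf (m.1 0) (n.1 0) hne).2
        rw [dist_eq_norm]
        simpa using this.le
    obtain ⟨L, hLinf, hL⟩ := hQ 1 F hlip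
    obtain ⟨p, hp⟩ := hLinf.nonempty
    obtain ⟨q, hq, hpq⟩ := hLinf.exists_gt p
    have hmono : ∀ c : ℕ, StrictMono (fun _ : Fin 1 => c) :=
      fun c i j h => absurd (Subsingleton.elim i j) (ne_of_lt h)
    set m : IncTuple 1 := ⟨fun _ => p, hmono p⟩
    set n : IncTuple 1 := ⟨fun _ => q, hmono q⟩
    have hlt := hL m n (fun _ => hp) (fun _ => hq) (fun _ _ => hpq)
    rw [dist_eq_norm] at hlt
    have := (hdistf p q (Nat.ne_of_lt hpq)).1
    simp only [hF, m, n] at hlt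
    linarith
  refine ⟨?_, main⟩
  apply Real.sSup_le _ zero_le_one
  rintro c ⟨hc0, hc⟩
  have h1 : c * 1 ≤ DeltaMod X 1 := hc 1 one_pos
  have h2 : DeltaMod X 1 ≤ 1 := by
    apply Real.sSup_le _ zero_le_one
    rintro d ⟨hd0, hdq⟩
    by_contra hd1
    exact (main d (by linarith)).2 hdq
  linarith
end

section
/- Every metric space with property Q is cut stable. Specifically, if M has property Q with constant Q_M, then M is C-cut stable with C = 8·Q_M + 1: for all k = l + m, bounded functions f : [ℕ]^l → M, g : [ℕ]^m → M, infinite sets L ⊆ ℕ, and cuts P, Q of {1,...,k} of size l, inf_{n̄ ∈ [L]^k} d_M(f(n_i : i ∈ P), g(n_i : i ∈ P^c)) ≤ (8Q_M + 1) · sup_{n̄ ∈ [L]^k} d_M(f(n_i : i ∈ Q), g(n_i : i ∈ Q^c)). -/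
open Filter Topology
open scoped ZeroAtInfty ENNReal NNReal

/-- strict mono from adjacent increases -/
theorem sm_of_adj {k : ℕ} (f : Fin k → ℕ)
    (h : ∀ (j : ℕ) (hj : j + 1 < k), f ⟨j, Nat.lt_of_succ_lt hj⟩ < f ⟨j+1, hj⟩) :
    StrictMono f := by
  have key : ∀ (d a : ℕ) (ha : a < k) (hb : a + d + 1 < k), f ⟨a, ha⟩ < f ⟨a+d+1, hb⟩ := by
    intro d
    induction d with
    | zero => intro a ha hb; exact h a hb
    | succ d ih =>
      intro a ha hb
      exact lt_trans (ih a ha (by omega)) (by have := h (a+d+1) (by omega); exact lt_of_lt_of_eq this (congrArg f (Fin.ext (show a+d+1+1 = a+(d+1)+1 by omega))))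
  intro a b hab
  have : (a : Fin k) = ⟨a.1, a.2⟩ := rfl
  have hb : b = ⟨a.1 + (b.1 - a.1 - 1) + 1, by omega⟩ := by
    apply Fin.ext; simp; omega
  rw [this, hb]
  exact key _ _ _ _

section rank
variable {k r : ℕ} (R : Finset (Fin k)) (hR : R.card = r)

theorem rankIn_le (hR : R.card = r) (p : Fin k) : rankIn R p ≤ r := hR ▸ Finset.card_filter_le R _

theorem mem_iff_emb (q : Fin k) : q ∈ R ↔ ∃ j : Fin r, R.orderEmbOfFin hR j = q := by
  constructor
  · intro hq
    have : q ∈ Set.range (R.orderEmbOfFin hR) := by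
      rw [Finset.range_orderEmbOfFin]; exact hq
    exact this
  · rintro ⟨j, rfl⟩; exact Finset.orderEmbOfFin_mem R hR j

theorem lt_rank_iff (p : Fin k) (j : Fin r) :
    R.orderEmbOfFin hR j ≤ p ↔ j.1 < rankIn R p := by
  classical
  set e := R.orderEmbOfFin hR with he
  have himg : R.filter (fun i => i ≤ p) = Finset.image e (Finset.univ.filter (fun j : Fin r => e j ≤ p)) := by
    ext q
    simp only [Finset.mem_filter, Finset.mem_image, Finset.mem_univ, true_and]
    constructor
    · rintro ⟨hq, hqp⟩
      obtain ⟨j, rfl⟩ := (mem_iff_emb R hR q).mp hq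
      exact ⟨j, hqp, rfl⟩
    · rintro ⟨j, hj, rfl⟩
      exact ⟨Finset.orderEmbOfFin_mem R hR j, hj⟩
  have hcard : rankIn R p = (Finset.univ.filter (fun j : Fin r => e j ≤ p)).card := by
    rw [rankIn, himg, Finset.card_image_of_injective _ (e.injective)]
  rw [hcard]
  set T := Finset.univ.filter (fun j : Fin r => e j ≤ p) with hT
  have hdc : ∀ j' j : Fin r, j' ≤ j → j ∈ T → j' ∈ T := by
    intro j' j hle hj
    simp only [hT, Finset.mem_filter, Finset.mem_univ, true_and] at hj ⊢
    exact le_trans (e.monotone hle) hj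
  constructor
  · intro hjp
    have hsub : Finset.Iic j ⊆ T := fun i hi => hdc i j (Finset.mem_Iic.mp hi) (by simp [hT, hjp])
    have := Finset.card_le_card hsub
    rw [Fin.card_Iic] at this; omega
  · intro hlt
    by_contra hnot
    have hsub : T ⊆ Finset.Iio j := by
      intro i hi
      rw [Finset.mem_Iio]
      by_contra hge
      exact hnot ((Finset.mem_filter.mp (hdc j i (le_of_not_gt hge) hi)).2)
    have := Finset.card_le_card hsub
    rw [Fin.card_Iio] at this; omega

theorem rank_pos_of_mem {p : Fin k} (hp : p ∈ R) : 0 < rankIn R p :=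
  Finset.card_pos.mpr ⟨p, Finset.mem_filter.mpr ⟨hp, le_refl p⟩⟩

theorem emb_rank {p : Fin k} (hp : p ∈ R) (hlt : rankIn R p - 1 < r) :
    R.orderEmbOfFin hR ⟨rankIn R p - 1, hlt⟩ = p := by
  obtain ⟨j, rfl⟩ := (mem_iff_emb R hR p).mp hp
  set q := R.orderEmbOfFin hR j with hq
  have h1 : j.1 < rankIn R q := (lt_rank_iff R hR q j).mp le_rfl
  have h2 : j.1 = rankIn R q - 1 := by
    by_contra hne
    have hjlt : j.1 < rankIn R q - 1 := by omega
    have : R.orderEmbOfFin hR ⟨rankIn R q - 1, hlt⟩ ≤ q :=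
      (lt_rank_iff R hR q ⟨rankIn R q - 1, hlt⟩).mpr (by simp; omega)
    have := (R.orderEmbOfFin hR).strictMono (show j < (⟨rankIn R q - 1, hlt⟩ : Fin r) by
      rw [Fin.lt_def]; simpa using hjlt)
    rw [← hq] at this
    exact absurd ‹R.orderEmbOfFin hR ⟨rankIn R q - 1, hlt⟩ ≤ q› (not_le.mpr this)
  exact congrArg _ (Fin.ext h2.symm)

theorem rank_emb (i : Fin r) : rankIn R (R.orderEmbOfFin hR i) = i.1 + 1 := by
  have h1 : i.1 < rankIn R (R.orderEmbOfFin hR i) := (lt_rank_iff R hR _ i).mp le_rfl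
  have h2 : rankIn R (R.orderEmbOfFin hR i) ≤ i.1 + 1 := by
    by_contra hgt
    push_neg at hgt
    have hle := rankIn_le R hR (R.orderEmbOfFin hR i)
    have : (R.orderEmbOfFin hR) ⟨i.1 + 1, by omega⟩ ≤ R.orderEmbOfFin hR i :=
      (lt_rank_iff R hR _ ⟨i.1+1, by omega⟩).mpr (by simpa using hgt)
    have := (R.orderEmbOfFin hR).strictMono (show i < ⟨i.1+1, by omega⟩ by rw [Fin.lt_def]; simp)
    omega
  omega

theorem rank_succ (p : ℕ) (h : p + 1 < k) :
    rankIn R ⟨p+1, h⟩ = rankIn R ⟨p, by omega⟩ + (if (⟨p+1, h⟩ : Fin k) ∈ R then 1 else 0) := by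
  classical
  by_cases hmem : (⟨p+1, h⟩ : Fin k) ∈ R
  · rw [if_pos hmem]
    have : R.filter (fun i => i ≤ ⟨p+1, h⟩) = insert ⟨p+1,h⟩ (R.filter (fun i => i ≤ ⟨p, by omega⟩)) := by
      ext q
      simp only [Finset.mem_filter, Finset.mem_insert]
      constructor
      · rintro ⟨hq, hle⟩
        rcases eq_or_ne q ⟨p+1,h⟩ with rfl | hne
        · exact Or.inl rfl
        · right; refine ⟨hq, ?_⟩
          rw [Fin.le_def] at hle ⊢
          simp at hle ⊢
          have : q.1 ≠ p + 1 := fun hh => hne (Fin.ext hh)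
          omega
      · rintro (rfl | ⟨hq, hle⟩)
        · exact ⟨hmem, le_rfl⟩
        · refine ⟨hq, ?_⟩; rw [Fin.le_def] at hle ⊢; simp at hle ⊢; omega
    rw [rankIn, this, Finset.card_insert_of_notMem]
    · rfl
    · simp only [Finset.mem_filter]
      rintro ⟨-, hle⟩
      rw [Fin.le_def] at hle; simp at hle
  · rw [if_neg hmem]
    have : R.filter (fun i => i ≤ ⟨p+1, h⟩) = R.filter (fun i => i ≤ ⟨p, by omega⟩) := by
      ext q
      simp only [Finset.mem_filter, and_congr_right_iff]
      intro hq
      rw [Fin.le_def, Fin.le_def]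
      simp
      constructor
      · intro hle
        have : q.1 ≠ p + 1 := fun hh => hmem (by rwa [show (⟨p+1,h⟩ : Fin k) = q from (Fin.ext hh.symm)])
        omega
      · omega
    rw [rankIn, this, rankIn]; omega
end rank

theorem fillA {k r : ℕ} (R S : Finset (Fin k)) (hR : R.card = r) (hS : S.card = r) :
    ∃ a : Fin k → ℕ, StrictMono a ∧
      ∀ i : Fin r, a (R.orderEmbOfFin hR i) = (k+1) * (S.orderEmbOfFin hS i).1 + k := by
  classical
  have hrk : ∀ p : Fin k, rankIn R p ≤ r := rankIn_le R hR
  refine ⟨fun p => if h : 0 < rankIn R p then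
      (k+1) * (S.orderEmbOfFin hS ⟨rankIn R p - 1, by have := hrk p; omega⟩).1 + k
        + (p.1 - (R.orderEmbOfFin hR ⟨rankIn R p - 1, by have := hrk p; omega⟩).1)
    else p.1, ?_, ?_⟩
  · apply sm_of_adj
    intro j hj
    have hjk : j < k := Nat.lt_of_succ_lt hj
    have hsucc : rankIn R ⟨j+1, hj⟩ = rankIn R ⟨j, hjk⟩ + (if (⟨j+1, hj⟩ : Fin k) ∈ R then 1 else 0) :=
      rank_succ (r := r) R j hj
    dsimp only
    by_cases hmem : (⟨j+1, hj⟩ : Fin k) ∈ R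
    · rw [if_pos hmem] at hsucc
      have hpos' : 0 < rankIn R ⟨j+1, hj⟩ := by omega
      rw [dif_pos hpos']
      have hemb' : R.orderEmbOfFin hR ⟨rankIn R ⟨j+1, hj⟩ - 1, by have := hrk ⟨j+1, hj⟩; omega⟩
          = ⟨j+1, hj⟩ := emb_rank R hR hmem _
      have hemb'v : (R.orderEmbOfFin hR ⟨rankIn R ⟨j+1, hj⟩ - 1, by have := hrk ⟨j+1, hj⟩; omega⟩).1
          = j + 1 := by rw [hemb']
      by_cases hpos : 0 < rankIn R ⟨j, hjk⟩
      · rw [dif_pos hpos]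
        have hle : (R.orderEmbOfFin hR ⟨rankIn R ⟨j, hjk⟩ - 1, by have := hrk ⟨j, hjk⟩; omega⟩).1 ≤ j :=
          Fin.le_def.mp ((lt_rank_iff R hR ⟨j, hjk⟩ ⟨rankIn R ⟨j, hjk⟩ - 1, by have := hrk ⟨j, hjk⟩; omega⟩).mpr (by simp; omega))
        have hSlt : (S.orderEmbOfFin hS ⟨rankIn R ⟨j, hjk⟩ - 1, by have := hrk ⟨j, hjk⟩; omega⟩).1
            < (S.orderEmbOfFin hS ⟨rankIn R ⟨j+1, hj⟩ - 1, by have := hrk ⟨j+1, hj⟩; omega⟩).1 := by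
          apply (S.orderEmbOfFin hS).strictMono
          rw [Fin.lt_def]; simp; omega
        have hexp : (k+1) * ((S.orderEmbOfFin hS ⟨rankIn R ⟨j, hjk⟩ - 1, by have := hrk ⟨j, hjk⟩; omega⟩).1 + 1)
            = (k+1) * (S.orderEmbOfFin hS ⟨rankIn R ⟨j, hjk⟩ - 1, by have := hrk ⟨j, hjk⟩; omega⟩).1 + (k+1) := by ring
        have hmul : (k+1) * ((S.orderEmbOfFin hS ⟨rankIn R ⟨j, hjk⟩ - 1, by have := hrk ⟨j, hjk⟩; omega⟩).1 + 1)
            ≤ (k+1) * (S.orderEmbOfFin hS ⟨rankIn R ⟨j+1, hj⟩ - 1, by have := hrk ⟨j+1, hj⟩; omega⟩).1 :=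
          Nat.mul_le_mul_left _ (by omega)
        omega
      · rw [dif_neg hpos]
        omega
    · rw [if_neg hmem] at hsucc
      have hr' : rankIn R ⟨j+1, hj⟩ = rankIn R ⟨j, hjk⟩ := by omega
      by_cases hpos : 0 < rankIn R ⟨j, hjk⟩
      · have hpos' : 0 < rankIn R ⟨j+1, hj⟩ := by omega
        rw [dif_pos hpos, dif_pos hpos']
        have hle : (R.orderEmbOfFin hR ⟨rankIn R ⟨j, hjk⟩ - 1, by have := hrk ⟨j, hjk⟩; omega⟩) ≤ ⟨j, hjk⟩ :=
          (lt_rank_iff R hR ⟨j, hjk⟩ _).mpr (by simp; omega)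
        rw [Fin.le_def] at hle
        have hix : (⟨rankIn R ⟨j+1, hj⟩ - 1, by have := hrk ⟨j+1, hj⟩; omega⟩ : Fin r)
            = ⟨rankIn R ⟨j, hjk⟩ - 1, by have := hrk ⟨j, hjk⟩; omega⟩ := by
          apply Fin.ext; simp [hr']
        rw [hix]
        simp only [Fin.le_def] at hle
        omega
      · have hpos' : ¬ 0 < rankIn R ⟨j+1, hj⟩ := by omega
        rw [dif_neg hpos, dif_neg hpos']
        omega
  · intro i
    have hmem := Finset.orderEmbOfFin_mem R hR i
    have hpos : 0 < rankIn R (R.orderEmbOfFin hR i) := rank_pos_of_mem R hmem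
    dsimp only
    rw [dif_pos hpos]
    have hre := rank_emb R hR i
    have hix : (⟨rankIn R (R.orderEmbOfFin hR i) - 1, by
        have := rankIn_le R hR (R.orderEmbOfFin hR i); omega⟩ : Fin r) = i := by
      apply Fin.ext; simp [hre]
    rw [hix]
    omega

section connect
variable {k : ℕ}

theorem sm_val (t : IncTuple k) {a b : ℕ} {ha : a < k} {hb : b < k} (h : a < b) :
    t.1 ⟨a, ha⟩ < t.1 ⟨b, hb⟩ := t.2 (Fin.mk_lt_mk.mpr h)

theorem sm_val_le (t : IncTuple k) {a b : ℕ} {ha : a < k} {hb : b < k} (h : a ≤ b) :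
    t.1 ⟨a, ha⟩ ≤ t.1 ⟨b, hb⟩ := t.2.monotone (Fin.mk_le_mk.mpr h)

/-- The `i`-th tuple on the shifting walk from `m` to `n`. -/
def shiftT (m n : IncTuple k) (i : ℕ) (hik : i ≤ k) : Fin k → ℕ := fun j =>
  if h : j.1 + i < k then m.1 ⟨j.1 + i, h⟩ else n.1 ⟨j.1 + i - k, by omega⟩

theorem shiftT_sm (m n : IncTuple k) (h : ordLT m n) (i : ℕ) (hik : i ≤ k) : StrictMono (shiftT m n i hik) := by
  apply sm_of_adj
  intro j hj
  show (if h : j + i < k then m.1 ⟨j + i, h⟩ else n.1 ⟨j + i - k, by omega⟩)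
    < (if h : j + 1 + i < k then m.1 ⟨j + 1 + i, h⟩ else n.1 ⟨j + 1 + i - k, by omega⟩)
  by_cases h1 : j + 1 + i < k
  · rw [dif_pos (by omega : j + i < k), dif_pos h1]
    exact sm_val m (by omega)
  · rw [dif_neg h1]
    by_cases h2 : j + i < k
    · rw [dif_pos h2]; exact h _ _
    · rw [dif_neg h2]
      exact sm_val n (by omega)

theorem shiftT_adj (m n : IncTuple k) (h : ordLT m n) (i : ℕ) (hi : i < k) :
    (interGraph k).Adj ⟨shiftT m n i (by omega), shiftT_sm m n h i (by omega)⟩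
      ⟨shiftT m n (i+1) (by omega), shiftT_sm m n h (i+1) (by omega)⟩ := by
  have hk : 0 < k := by omega
  show _ ∧ _
  constructor
  · intro heq
    have hv2 : (if hh : k - 1 + i < k then m.1 ⟨k - 1 + i, hh⟩ else n.1 ⟨k - 1 + i - k, by omega⟩)
        = (if hh : k - 1 + (i+1) < k then m.1 ⟨k - 1 + (i+1), hh⟩ else n.1 ⟨k - 1 + (i+1) - k, by omega⟩) :=
      congrFun (congrArg Subtype.val heq) ⟨k-1, by omega⟩
    rw [dif_neg (by omega : ¬ (k - 1 + (i+1) < k))] at hv2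
    by_cases h0 : k - 1 + i < k
    · rw [dif_pos h0] at hv2
      exact absurd hv2 (ne_of_lt (h _ _))
    · rw [dif_neg h0] at hv2
      exact absurd hv2 (ne_of_lt (sm_val n (by omega)))
  · left
    constructor
    · intro j
      show (if h : j.1 + i < k then m.1 ⟨j.1 + i, h⟩ else n.1 ⟨j.1 + i - k, by omega⟩)
        ≤ (if h : j.1 + (i+1) < k then m.1 ⟨j.1 + (i+1), h⟩ else n.1 ⟨j.1 + (i+1) - k, by omega⟩)
      by_cases h1 : j.1 + (i+1) < k
      · rw [dif_pos h1, dif_pos (by omega : j.1 + i < k)]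
        exact le_of_lt (sm_val m (by omega))
      · rw [dif_neg h1]
        by_cases h2 : j.1 + i < k
        · rw [dif_pos h2]; exact le_of_lt (h _ _)
        · rw [dif_neg h2]
          exact sm_val_le n (by omega)
    · intro j hjk
      show (if h : j + (i+1) < k then m.1 ⟨j + (i+1), h⟩ else n.1 ⟨j + (i+1) - k, by omega⟩)
        ≤ (if h : j + 1 + i < k then m.1 ⟨j + 1 + i, h⟩ else n.1 ⟨j + 1 + i - k, by omega⟩)
      by_cases h1 : j + (i+1) < k
      · rw [dif_pos h1, dif_pos (by omega : j + 1 + i < k)]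
        exact sm_val_le m (by omega)
      · rw [dif_neg h1, dif_neg (by omega : ¬ (j + 1 + i < k))]
        exact sm_val_le n (by omega)

theorem reach_of_ordLT (m n : IncTuple k) (h : ordLT m n) :
    (interGraph k).Reachable m n := by
  have key : ∀ i (hik : i ≤ k), (interGraph k).Reachable m ⟨shiftT m n i hik, shiftT_sm m n h i hik⟩ := by
    intro i
    induction i with
    | zero =>
      intro _
      have heq : m = ⟨shiftT m n 0 (by omega), shiftT_sm m n h 0 (by omega)⟩ := by
        apply Subtype.ext
        funext j
        show m.1 j = if h : j.1 + 0 < k then m.1 ⟨j.1 + 0, h⟩ else n.1 ⟨j.1 + 0 - k, by omega⟩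
        rw [dif_pos (by omega : j.1 + 0 < k)]
        exact congrArg m.1 (Fin.ext (by simp))
      rw [← heq]
    | succ i ih =>
      intro hik
      exact (ih (by omega)).trans (SimpleGraph.Adj.reachable (shiftT_adj m n h i (by omega)))
  have heq : n = ⟨shiftT m n k le_rfl, shiftT_sm m n h k le_rfl⟩ := by
    apply Subtype.ext
    funext j
    show n.1 j = if h : j.1 + k < k then m.1 ⟨j.1 + k, h⟩ else n.1 ⟨j.1 + k - k, by omega⟩
    rw [dif_neg (by omega : ¬ (j.1 + k < k))]
    exact congrArg n.1 (Fin.ext (by simp))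
  rw [heq]
  exact key k le_rfl

theorem interGraph_reachable (m n : IncTuple k) : (interGraph k).Reachable m n := by
  rcases Nat.eq_zero_or_pos k with hk | hk
  · subst hk
    have : m = n := Subtype.ext (funext fun j => j.elim0)
    rw [this]
  · have hsm : StrictMono (fun j : Fin k => m.1 ⟨k-1, by omega⟩ + n.1 ⟨k-1, by omega⟩ + 1 + j.1) := by
      intro a b hab; simp only [add_lt_add_iff_left]; exact Fin.lt_def.mp hab
    set p : IncTuple k := ⟨fun j => m.1 ⟨k-1, by omega⟩ + n.1 ⟨k-1, by omega⟩ + 1 + j.1, hsm⟩ with hp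
    have h1 : ordLT m p := by
      intro i j
      have hle : m.1 i ≤ m.1 ⟨k-1, by omega⟩ := m.2.monotone (by rw [Fin.le_def]; simp; omega)
      calc m.1 i ≤ m.1 ⟨k-1, by omega⟩ := hle
      _ < p.1 j := by simp [hp]; omega
    have h2 : ordLT n p := by
      intro i j
      have hle : n.1 i ≤ n.1 ⟨k-1, by omega⟩ := n.2.monotone (by rw [Fin.le_def]; simp; omega)
      calc n.1 i ≤ n.1 ⟨k-1, by omega⟩ := hle
      _ < p.1 j := by simp [hp]; omega
    exact (reach_of_ordLT m p h1).trans (reach_of_ordLT n p h2).symm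

theorem lip_of_edge {M : Type*} [MetricSpace M] (H : IncTuple k → M) (K : ℝ)
    (he : ∀ m n : IncTuple k, (interGraph k).Adj m n → dist (H m) (H n) ≤ K)
    (m n : IncTuple k) : dist (H m) (H n) ≤ K * dI m n := by
  have walkb : ∀ (u v : IncTuple k) (w : (interGraph k).Walk u v),
      dist (H u) (H v) ≤ K * w.length := by
    intro u v w
    induction w with
    | nil => simp
    | @cons a b c hadj q ih =>
      have h1 : dist (H a) (H c) ≤ dist (H a) (H b) + dist (H b) (H c) := dist_triangle _ _ _
      have h2 := he a b hadj
      have hlen : ((SimpleGraph.Walk.cons hadj q).length : ℝ) = q.length + 1 := by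
        rw [SimpleGraph.Walk.length_cons]; push_cast; ring
      rw [hlen]
      calc dist (H a) (H c) ≤ K + K * q.length := by linarith
      _ = K * (q.length + 1) := by ring
  obtain ⟨w, hw⟩ := (interGraph_reachable m n).exists_walk_length_eq_dist
  have hb := walkb m n w
  rw [hw] at hb
  exact hb

end connect

section interp
variable {k r : ℕ}

/-- Filler values placed at positions outside `QC`. -/
noncomputable def alphaF (L : Set ℕ) (QC : Finset (Fin k)) (hQC : QC.card = r) (v : Fin k → ℕ) :
    Fin k → ℕ := fun j =>
  if h : 0 < rankIn QC j then
    Nat.nth (· ∈ L) ((k+1) * v (QC.orderEmbOfFin hQC ⟨rankIn QC j - 1,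
        by have := rankIn_le QC hQC j; omega⟩) + k
      + (j.1 - (QC.orderEmbOfFin hQC ⟨rankIn QC j - 1,
        by have := rankIn_le QC hQC j; omega⟩).1))
  else Nat.nth (· ∈ L) j.1

/-- The interleaved tuple: `θ(u)` at positions of `QC`, fillers elsewhere. -/
noncomputable def zzF (L : Set ℕ) (QC : Finset (Fin k)) (hQC : QC.card = r)
    (v u : Fin k → ℕ) : Fin k → ℕ := fun j =>
  if j ∈ QC then Nat.nth (· ∈ L) ((k+1) * u j + k) else alphaF L QC hQC v j

theorem zzF_mem (L : Set ℕ) (hL : L.Infinite) (QC : Finset (Fin k)) (hQC : QC.card = r)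
    (v u : Fin k → ℕ) : ∀ j, zzF L QC hQC v u j ∈ L := by
  intro j
  have hinf : (setOf (· ∈ L)).Infinite := hL
  unfold zzF alphaF
  split
  · exact Nat.nth_mem_of_infinite hinf _
  · split
    · exact Nat.nth_mem_of_infinite hinf _
    · exact Nat.nth_mem_of_infinite hinf _

theorem zzF_sm (L : Set ℕ) (hL : L.Infinite) (QC : Finset (Fin k)) (hQC : QC.card = r)
    (v u : Fin k → ℕ) (hu : StrictMono u) (huv : ∀ j, u j ≤ v j)
    (hkey : ∀ c jj : Fin k, c.1 + 1 < jj.1 → v c < u jj) :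
    StrictMono (zzF L QC hQC v u) := by
  have hinf : (setOf (· ∈ L)).Infinite := hL
  have hnth : StrictMono (Nat.nth (· ∈ L)) := Nat.nth_strictMono hinf
  have hrk : ∀ p : Fin k, rankIn QC p ≤ r := rankIn_le QC hQC
  apply sm_of_adj
  intro j hj
  have hjk : j < k := Nat.lt_of_succ_lt hj
  have hsucc : rankIn QC ⟨j+1, hj⟩ = rankIn QC ⟨j, hjk⟩
      + (if (⟨j+1, hj⟩ : Fin k) ∈ QC then 1 else 0) := rank_succ (r := r) QC j hj
  unfold zzF
  by_cases hm1 : (⟨j, hjk⟩ : Fin k) ∈ QC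
  · rw [if_pos hm1]
    by_cases hm2 : (⟨j+1, hj⟩ : Fin k) ∈ QC
    · rw [if_pos hm2]
      apply hnth
      have hlt := hu (show (⟨j, hjk⟩ : Fin k) < ⟨j+1, hj⟩ from Fin.mk_lt_mk.mpr (by omega))
      have hexp : (k+1) * (u ⟨j, hjk⟩ + 1) = (k+1) * u ⟨j, hjk⟩ + (k+1) := by ring
      have hmul : (k+1) * (u ⟨j, hjk⟩ + 1) ≤ (k+1) * u ⟨j+1, hj⟩ :=
        Nat.mul_le_mul_left _ (by omega)
      omega
    · simp only [if_neg hm2] at hsucc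
      rw [if_neg hm2]
      unfold alphaF
      have hpos : 0 < rankIn QC ⟨j, hjk⟩ := rank_pos_of_mem QC hm1
      have hpos' : 0 < rankIn QC ⟨j+1, hj⟩ := by omega
      rw [dif_pos hpos']
      have hix : (⟨rankIn QC ⟨j+1, hj⟩ - 1, by have := hrk ⟨j+1, hj⟩; omega⟩ : Fin r)
          = ⟨rankIn QC ⟨j, hjk⟩ - 1, by have := hrk ⟨j, hjk⟩; omega⟩ := by
        apply Fin.ext; simp; omega
      rw [hix, emb_rank QC hQC hm1]
      apply hnth
      have hmul : (k+1) * u ⟨j, hjk⟩ ≤ (k+1) * v ⟨j, hjk⟩ :=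
        Nat.mul_le_mul_left _ (huv _)
      simp only [Fin.val_mk] at *
      omega
  · rw [if_neg hm1]
    by_cases hm2 : (⟨j+1, hj⟩ : Fin k) ∈ QC
    · rw [if_pos hm2]
      rw [if_pos hm2] at hsucc
      unfold alphaF
      by_cases hpos : 0 < rankIn QC ⟨j, hjk⟩
      · rw [dif_pos hpos]
        have hcQ := Finset.orderEmbOfFin_mem QC hQC
          ⟨rankIn QC ⟨j, hjk⟩ - 1, by have := hrk ⟨j, hjk⟩; omega⟩
        have hcle : (QC.orderEmbOfFin hQC ⟨rankIn QC ⟨j, hjk⟩ - 1,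
            by have := hrk ⟨j, hjk⟩; omega⟩) ≤ ⟨j, hjk⟩ :=
          (lt_rank_iff QC hQC ⟨j, hjk⟩ _).mpr (by simp; omega)
        have hcne : (QC.orderEmbOfFin hQC ⟨rankIn QC ⟨j, hjk⟩ - 1,
            by have := hrk ⟨j, hjk⟩; omega⟩) ≠ ⟨j, hjk⟩ := by
          intro he; rw [he] at hcQ; exact hm1 hcQ
        have hclt : (QC.orderEmbOfFin hQC ⟨rankIn QC ⟨j, hjk⟩ - 1,
            by have := hrk ⟨j, hjk⟩; omega⟩).1 < j := by
          rcases lt_or_eq_of_le (Fin.le_def.mp hcle) with h | h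
          · exact h
          · exact absurd (Fin.ext h) hcne
        have hvu := hkey (QC.orderEmbOfFin hQC ⟨rankIn QC ⟨j, hjk⟩ - 1,
            by have := hrk ⟨j, hjk⟩; omega⟩) ⟨j+1, hj⟩ (by simp; omega)
        apply hnth
        have hexp : (k+1) * (v (QC.orderEmbOfFin hQC ⟨rankIn QC ⟨j, hjk⟩ - 1,
            by have := hrk ⟨j, hjk⟩; omega⟩) + 1)
            = (k+1) * v (QC.orderEmbOfFin hQC ⟨rankIn QC ⟨j, hjk⟩ - 1,
            by have := hrk ⟨j, hjk⟩; omega⟩) + (k+1) := by ring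
        have hmul : (k+1) * (v (QC.orderEmbOfFin hQC ⟨rankIn QC ⟨j, hjk⟩ - 1,
            by have := hrk ⟨j, hjk⟩; omega⟩) + 1) ≤ (k+1) * u ⟨j+1, hj⟩ :=
          Nat.mul_le_mul_left _ (by omega)
        simp only [Fin.val_mk] at *
        omega
      · rw [dif_neg hpos]
        apply hnth
        simp only [Fin.val_mk]
        omega
    · rw [if_neg hm2]
      rw [if_neg hm2] at hsucc
      unfold alphaF
      have hr' : rankIn QC ⟨j+1, hj⟩ = rankIn QC ⟨j, hjk⟩ := by omega
      by_cases hpos : 0 < rankIn QC ⟨j, hjk⟩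
      · have hpos' : 0 < rankIn QC ⟨j+1, hj⟩ := by omega
        rw [dif_pos hpos, dif_pos hpos']
        have hix : (⟨rankIn QC ⟨j+1, hj⟩ - 1, by have := hrk ⟨j+1, hj⟩; omega⟩ : Fin r)
            = ⟨rankIn QC ⟨j, hjk⟩ - 1, by have := hrk ⟨j, hjk⟩; omega⟩ := by
          apply Fin.ext; simp; omega
        rw [hix]
        have hcle : (QC.orderEmbOfFin hQC ⟨rankIn QC ⟨j, hjk⟩ - 1,
            by have := hrk ⟨j, hjk⟩; omega⟩) ≤ ⟨j, hjk⟩ :=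
          (lt_rank_iff QC hQC ⟨j, hjk⟩ _).mpr (by simp; omega)
        rw [Fin.le_def] at hcle
        apply hnth
        simp only [Fin.val_mk] at *
        omega
      · have hpos' : ¬ 0 < rankIn QC ⟨j+1, hj⟩ := by omega
        rw [dif_neg hpos, dif_neg hpos']
        apply hnth
        simp only [Fin.val_mk]
        omega

end interp

theorem edge_bound {l m : ℕ} {M : Type*} [MetricSpace M]
    (f : (Fin l → ℕ) → M) (g : (Fin m → ℕ) → M) (L : Set ℕ) (hL : L.Infinite)
    (Q : Finset (Fin (l+m))) (hQ : Q.card = l) (lam : ℝ)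
    (hlam : ∀ s : Fin (l+m) → ℕ, StrictMono s → (∀ j, s j ∈ L) →
      dist (f (subTuple s Q hQ)) (g (subTuple s Qᶜ (compl_card Q hQ))) ≤ lam)
    (mt nt : IncTuple (l+m)) (hinter : InterLE mt.1 nt.1) :
    dist (g (subTuple (fun j => Nat.nth (· ∈ L) ((l+m+1) * mt.1 j + (l+m))) Qᶜ (compl_card Q hQ)))
         (g (subTuple (fun j => Nat.nth (· ∈ L) ((l+m+1) * nt.1 j + (l+m))) Qᶜ (compl_card Q hQ)))
      ≤ lam + lam := by
  have hQC : Qᶜ.card = m := compl_card Q hQ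
  set z := zzF L Qᶜ hQC nt.1 mt.1 with hz
  set z' := zzF L Qᶜ hQC nt.1 nt.1 with hz'
  have hkeym : ∀ c jj : Fin (l+m), c.1 + 1 < jj.1 → nt.1 c < mt.1 jj := by
    intro c jj hcj
    have h1 : nt.1 ⟨c.1, c.isLt⟩ ≤ mt.1 ⟨c.1 + 1, by omega⟩ := hinter.2 c.1 (by omega)
    have h2 : nt.1 c = nt.1 ⟨c.1, c.isLt⟩ := congrArg nt.1 (Fin.ext rfl)
    have h3 : mt.1 ⟨c.1 + 1, by omega⟩ < mt.1 jj := mt.2 (by rw [Fin.lt_def]; simpa using hcj)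
    omega
  have hz_sm : StrictMono z := zzF_sm L hL Qᶜ hQC nt.1 mt.1 mt.2 hinter.1 hkeym
  have hz'_sm : StrictMono z' := zzF_sm L hL Qᶜ hQC nt.1 nt.1 nt.2 (fun _ => le_rfl)
    (fun c jj hcj => nt.2 (by rw [Fin.lt_def]; omega))
  have hQeq : subTuple z Q hQ = subTuple z' Q hQ := by
    funext i
    have hmem : Q.orderEmbOfFin hQ i ∉ Qᶜ := by
      rw [Finset.mem_compl, not_not]; exact Finset.orderEmbOfFin_mem Q hQ i
    show zzF L Qᶜ hQC nt.1 mt.1 _ = zzF L Qᶜ hQC nt.1 nt.1 _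
    unfold zzF
    rw [if_neg hmem, if_neg hmem]
  have hCm : subTuple z Qᶜ (compl_card Q hQ)
      = subTuple (fun j => Nat.nth (· ∈ L) ((l+m+1) * mt.1 j + (l+m))) Qᶜ (compl_card Q hQ) := by
    funext i
    show zzF L Qᶜ hQC nt.1 mt.1 _ = _
    unfold zzF
    rw [if_pos (Finset.orderEmbOfFin_mem Qᶜ (compl_card Q hQ) i)]
    rfl
  have hCn : subTuple z' Qᶜ (compl_card Q hQ)
      = subTuple (fun j => Nat.nth (· ∈ L) ((l+m+1) * nt.1 j + (l+m))) Qᶜ (compl_card Q hQ) := by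
    funext i
    show zzF L Qᶜ hQC nt.1 nt.1 _ = _
    unfold zzF
    rw [if_pos (Finset.orderEmbOfFin_mem Qᶜ (compl_card Q hQ) i)]
    rfl
  have h1 := hlam z hz_sm (zzF_mem L hL Qᶜ hQC nt.1 mt.1)
  have h2 := hlam z' hz'_sm (zzF_mem L hL Qᶜ hQC nt.1 nt.1)
  rw [← hCm, ← hCn]
  calc dist (g (subTuple z Qᶜ (compl_card Q hQ))) (g (subTuple z' Qᶜ (compl_card Q hQ)))
      ≤ dist (g (subTuple z Qᶜ (compl_card Q hQ))) (f (subTuple z Q hQ))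
        + dist (f (subTuple z Q hQ)) (g (subTuple z' Qᶜ (compl_card Q hQ))) := dist_triangle _ _ _
    _ ≤ lam + lam := by
        rw [dist_comm (g _) (f _)]
        exact add_le_add h1 (by rw [hQeq]; exact h2)

/-- Every metric space with property `Q` is cut stable with constant `8·Q_M + 1`. -/
theorem stmt8 (M : Type*) [MetricSpace M] (hQ : HasPropQ M) :
    CutStableWith M (8 * QConst M + 1) := by
  intro l m f g hf hg L hL P Q hP hQc
  have hinf : (setOf (· ∈ L)).Infinite := hL
  have hnth : StrictMono (Nat.nth (· ∈ L)) := Nat.nth_strictMono hinf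
  have hmemL : ∀ a, Nat.nth (· ∈ L) a ∈ L := Nat.nth_mem_of_infinite hinf
  set lam := sSup (cutDistSet f g L Q hQc) with hlamdef
  -- a sample tuple in [L]^(l+m)
  have hs0 : StrictMono (fun j : Fin (l+m) => Nat.nth (· ∈ L) j.1) :=
    fun a b hab => hnth (Fin.lt_def.mp hab)
  have hs0mem : ∀ j, (fun j : Fin (l+m) => Nat.nth (· ∈ L) j.1) j ∈ L := fun j => hmemL _
  obtain ⟨Rf, hRf⟩ := hf
  obtain ⟨Rg, hRg⟩ := hg
  set a₀ := subTuple (fun j : Fin (l+m) => Nat.nth (· ∈ L) j.1) Q hQc with ha₀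
  set b₀ := subTuple (fun j : Fin (l+m) => Nat.nth (· ∈ L) j.1) Qᶜ (compl_card Q hQc) with hb₀
  have hbdd : BddAbove (cutDistSet f g L Q hQc) := by
    refine ⟨Rf + dist (f a₀) (g b₀) + Rg, ?_⟩
    rintro d ⟨n, hsm, hmem, rfl⟩
    calc dist (f (subTuple n Q hQc)) (g (subTuple n Qᶜ (compl_card Q hQc)))
        ≤ dist (f (subTuple n Q hQc)) (f a₀) + dist (f a₀) (g (subTuple n Qᶜ (compl_card Q hQc))) :=
          dist_triangle _ _ _
      _ ≤ dist (f (subTuple n Q hQc)) (f a₀)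
          + (dist (f a₀) (g b₀) + dist (g b₀) (g (subTuple n Qᶜ (compl_card Q hQc)))) :=
          add_le_add (le_refl _) (dist_triangle _ _ _)
      _ ≤ Rf + (dist (f a₀) (g b₀) + Rg) := by
          have h1 := hRf (subTuple n Q hQc) a₀
          have h2 := hRg b₀ (subTuple n Qᶜ (compl_card Q hQc))
          linarith
      _ = Rf + dist (f a₀) (g b₀) + Rg := by ring
  have hlam : ∀ s : Fin (l+m) → ℕ, StrictMono s → (∀ j, s j ∈ L) →
      dist (f (subTuple s Q hQc)) (g (subTuple s Qᶜ (compl_card Q hQc))) ≤ lam := by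
    intro s hsm hmem
    exact le_csSup hbdd ⟨s, hsm, hmem, rfl⟩
  have hlam0 : 0 ≤ lam :=
    le_trans dist_nonneg (hlam _ hs0 hs0mem)
  -- the key estimate, for each valid property Q constant C
  have key : ∀ C : ℝ, 0 ≤ C → HasPropQConst M C →
      sInf (cutDistSet f g L P hP) ≤ lam + C * (2 * lam) := by
    intro C hC0 hCprop
    set θ : ℕ → ℕ := fun a => Nat.nth (· ∈ L) ((l+m+1) * a + (l+m)) with hθ
    set H₂ : IncTuple (l+m) → M :=
      fun t => g (subTuple (fun j => θ (t.1 j)) Qᶜ (compl_card Q hQc)) with hH₂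
    have hedge : ∀ mt nt : IncTuple (l+m), (interGraph (l+m)).Adj mt nt →
        dist (H₂ mt) (H₂ nt) ≤ 2 * lam := by
      intro mt nt hadj
      rcases (show _ ∧ Interlacing mt.1 nt.1 from hadj).2 with h | h
      · have := edge_bound f g L hL Q hQc lam hlam mt nt h
        calc dist (H₂ mt) (H₂ nt) ≤ lam + lam := this
        _ = 2 * lam := by ring
      · have := edge_bound f g L hL Q hQc lam hlam nt mt h
        calc dist (H₂ mt) (H₂ nt) = dist (H₂ nt) (H₂ mt) := dist_comm _ _
        _ ≤ lam + lam := this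
        _ = 2 * lam := by ring
    have hlip : ∀ mt nt : IncTuple (l+m), dist (H₂ mt) (H₂ nt) ≤ (2 * lam) * dI mt nt :=
      lip_of_edge H₂ (2 * lam) hedge
    obtain ⟨L₁, hL₁, hconc⟩ := hCprop (l+m) H₂ (2 * lam) (by linarith) hlip
    have hinf₁ : (setOf (· ∈ L₁)).Infinite := hL₁
    have hψ : StrictMono (Nat.nth (· ∈ L₁)) := Nat.nth_strictMono hinf₁
    have hψmem : ∀ a, Nat.nth (· ∈ L₁) a ∈ L₁ := Nat.nth_mem_of_infinite hinf₁
    obtain ⟨a, ha_sm, ha⟩ := fillA Q P hQc hP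
    obtain ⟨b, hb_sm, hb⟩ := fillA Qᶜ Pᶜ (compl_card Q hQc) (compl_card P hP)
    set v : Fin (l+m) → ℕ := fun p => Nat.nth (· ∈ L₁) (a p) with hv
    set w : Fin (l+m) → ℕ := fun p => Nat.nth (· ∈ L₁) (b p) with hw
    have hv_sm : StrictMono v := fun x y hxy => hψ (ha_sm hxy)
    have hw_sm : StrictMono w := fun x y hxy => hψ (hb_sm hxy)
    set u : Fin (l+m) → ℕ :=
      fun j => θ (Nat.nth (· ∈ L₁) ((l+m+1) * j.1 + (l+m))) with hu
    have hu_sm : StrictMono u := by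
      intro x y hxy
      apply hnth
      have h1 : (l+m+1) * x.1 + (l+m) < (l+m+1) * y.1 + (l+m) := by
        have := Fin.lt_def.mp hxy
        have := Nat.mul_le_mul_left (l+m+1) (show x.1 + 1 ≤ y.1 by omega)
        have hexp : (l+m+1) * (x.1+1) = (l+m+1)*x.1 + (l+m+1) := by ring
        omega
      have h2 := hψ h1
      have h3 := Nat.mul_le_mul_left (l+m+1) (show Nat.nth (· ∈ L₁) ((l+m+1)*x.1+(l+m)) + 1 ≤ Nat.nth (· ∈ L₁) ((l+m+1)*y.1+(l+m)) by omega)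
      have hexp2 : (l+m+1) * (Nat.nth (· ∈ L₁) ((l+m+1)*x.1+(l+m)) + 1)
          = (l+m+1) * Nat.nth (· ∈ L₁) ((l+m+1)*x.1+(l+m)) + (l+m+1) := by ring
      omega
    have hu_mem : ∀ j, u j ∈ L := fun j => hmemL _
    have hPeq : subTuple u P hP = subTuple (fun j => θ (v j)) Q hQc := by
      funext i
      show θ (Nat.nth (· ∈ L₁) ((l+m+1) * (P.orderEmbOfFin hP i).1 + (l+m)))
        = θ (Nat.nth (· ∈ L₁) (a (Q.orderEmbOfFin hQc i)))
      rw [ha i]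
    have hPceq : subTuple u Pᶜ (compl_card P hP) = subTuple (fun j => θ (w j)) Qᶜ (compl_card Q hQc) := by
      funext i
      show θ (Nat.nth (· ∈ L₁) ((l+m+1) * (Pᶜ.orderEmbOfFin (compl_card P hP) i).1 + (l+m)))
        = θ (Nat.nth (· ∈ L₁) (b (Qᶜ.orderEmbOfFin (compl_card Q hQc) i)))
      rw [hb i]
    have hmemD : dist (f (subTuple u P hP)) (g (subTuple u Pᶜ (compl_card P hP)))
        ∈ cutDistSet f g L P hP := ⟨u, hu_sm, hu_mem, rfl⟩
    have hbddP : BddBelow (cutDistSet f g L P hP) := by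
      refine ⟨0, ?_⟩
      rintro d ⟨n, hsm, hmem, rfl⟩
      exact dist_nonneg
    have hθv_sm : StrictMono (fun j => θ (v j)) := by
      intro x y hxy
      apply hnth
      have h1 := hv_sm hxy
      have := Nat.mul_le_mul_left (l+m+1) (show v x + 1 ≤ v y by omega)
      have hexp : (l+m+1) * (v x + 1) = (l+m+1)*(v x) + (l+m+1) := by ring
      omega
    have hθv_mem : ∀ j, (fun j => θ (v j)) j ∈ L := fun j => hmemL _
    have hmid := hlam (fun j => θ (v j)) hθv_sm hθv_mem
    have hvmemAll : memAll L₁ ⟨v, hv_sm⟩ := fun i => hψmem _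
    have hwmemAll : memAll L₁ ⟨w, hw_sm⟩ := fun i => hψmem _
    have hcc := hconc ⟨v, hv_sm⟩ ⟨w, hw_sm⟩ hvmemAll hwmemAll
    calc sInf (cutDistSet f g L P hP)
        ≤ dist (f (subTuple u P hP)) (g (subTuple u Pᶜ (compl_card P hP))) := csInf_le hbddP hmemD
      _ = dist (f (subTuple (fun j => θ (v j)) Q hQc))
            (g (subTuple (fun j => θ (w j)) Qᶜ (compl_card Q hQc))) := by rw [hPeq, hPceq]
      _ ≤ dist (f (subTuple (fun j => θ (v j)) Q hQc))
            (g (subTuple (fun j => θ (v j)) Qᶜ (compl_card Q hQc)))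
          + dist (g (subTuple (fun j => θ (v j)) Qᶜ (compl_card Q hQc)))
            (g (subTuple (fun j => θ (w j)) Qᶜ (compl_card Q hQc))) := dist_triangle _ _ _
      _ ≤ lam + C * (2 * lam) := add_le_add hmid hcc
  -- conclude via the infimum defining QConst
  obtain ⟨C₀, hC₀0, hC₀⟩ := hQ
  have hSne : {C : ℝ | 0 ≤ C ∧ HasPropQConst M C}.Nonempty := ⟨C₀, hC₀0, hC₀⟩
  have hq0 : 0 ≤ QConst M := Real.sInf_nonneg fun x hx => hx.1
  refine le_of_forall_pos_le_add fun ε hε => ?_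
  rcases eq_or_lt_of_le hlam0 with heq | hpos
  · have h := key C₀ hC₀0 hC₀
    rw [← heq] at h ⊢
    simp only [mul_zero, add_zero, zero_add] at h ⊢
    linarith
  · obtain ⟨C, hCS, hClt⟩ := Real.lt_sInf_add_pos hSne (show 0 < ε / (8 * lam) by positivity)
    have h := key C hCS.1 hCS.2
    have h8 : C * (8 * lam) < (QConst M + ε / (8 * lam)) * (8 * lam) :=
      mul_lt_mul_of_pos_right hClt (by positivity)
    rw [add_mul, div_mul_cancel₀ _ (by positivity : (8:ℝ) * lam ≠ 0)] at h8
    have hClam : 0 ≤ C * lam := mul_nonneg hCS.1 hlam0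
    nlinarith
end

section
/- Let X be a Banach space, k ∈ ℕ, Ū = (U₁,...,U_k) a sequence of free ultrafilters on ℕ, and t a normalized Ū-weakly null unrooted tree in X of height k. Then the function N_t^Ū(x ⊕ Σ a_i e_i) = lim_{n₁,U₁} ... lim_{n_k,U_k} ‖x + Σ_{i=1}^k a_i t(n₁,...,n_i)‖ on X ⊕ ℝ^k satisfies N_t^Ū(x ⊕ Σ_{i=1}^j a_i e_i) ≤ N_t^Ū(x ⊕ Σ_{i=1}^k a_i e_i) for all 0 ≤ j ≤ k, x ∈ X and (a_i) ∈ ℝ^k. -/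
open Filter Topology
open scoped ZeroAtInfty ENNReal NNReal

lemma exists_ultra_lim (U : Ultrafilter ℕ) (f : ℕ → ℝ) (C : ℝ) (hf : ∀ n, |f n| ≤ C) :
    ∃ c, |c| ≤ C ∧ Tendsto f (U : Filter ℕ) (𝓝 c) := by
  have hmem : (Ultrafilter.map f U : Filter ℝ) ≤ 𝓟 (Set.Icc (-C) C) := by
    rw [Ultrafilter.coe_map, le_principal_iff, mem_map]
    exact univ_mem' fun n => Set.mem_Icc.mpr (abs_le.mp (hf n))
  obtain ⟨c, hc, hle⟩ := isCompact_Icc.ultrafilter_le_nhds (Ultrafilter.map f U) hmem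
  rw [Ultrafilter.coe_map] at hle
  exact ⟨c, abs_le.mpr (Set.mem_Icc.mp hc), hle⟩

lemma iterEventually_mono : ∀ (j : ℕ) (U : Fin j → Ultrafilter ℕ) (P Q : (Fin j → ℕ) → Prop),
    (∀ n, P n → Q n) → iterEventually j U P → iterEventually j U Q := by
  intro j
  induction j with
  | zero => intro U P Q h hP; exact h _ hP
  | succ j ih =>
      intro U P Q h hP
      exact ih _ _ _ (fun n hn => hn.mono fun b hb => h _ hb) hP

lemma ultraLim_le : ∀ (j : ℕ) (U : Fin j → Ultrafilter ℕ) (F G : (Fin j → ℕ) → ℝ) (C : ℝ),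
    (∀ n, |F n| ≤ C) → (∀ n, |G n| ≤ C) →
    iterEventually j U (fun n => F n ≤ G n) → ultraLim j U F ≤ ultraLim j U G := by
  intro j
  induction j with
  | zero => intro U F G C _ _ h; exact h
  | succ j ih =>
      intro U F G C hF hG h
      show ultraLim j _ _ ≤ ultraLim j _ _
      apply ih _ _ _ C
      · intro n
        obtain ⟨c, hc, ht⟩ := exists_ultra_lim (U (Fin.last j)) _ C (fun b => hF (Fin.snoc n b))
        rw [ht.limUnder_eq]; exact hc
      · intro n
        obtain ⟨c, hc, ht⟩ := exists_ultra_lim (U (Fin.last j)) _ C (fun b => hG (Fin.snoc n b))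
        rw [ht.limUnder_eq]; exact hc
      · refine iterEventually_mono j _ _ _ ?_ h
        intro n hn
        obtain ⟨c, _, htc⟩ := exists_ultra_lim (U (Fin.last j)) _ C (fun b => hF (Fin.snoc n b))
        obtain ⟨d, _, htd⟩ := exists_ultra_lim (U (Fin.last j)) _ C (fun b => hG (Fin.snoc n b))
        rw [htc.limUnder_eq, htd.limUnder_eq]
        exact le_of_tendsto_of_tendsto htc htd hn

lemma ultraLim_castSucc (k : ℕ) (U : Fin (k+1) → Ultrafilter ℕ) (F : (Fin k → ℕ) → ℝ) :
    ultraLim (k+1) U (fun n => F (fun i => n i.castSucc))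
      = ultraLim k (fun i => U i.castSucc) F := by
  show ultraLim k _ _ = _
  congr 1
  funext n
  have h : (fun b : ℕ => F (fun i => Fin.snoc (α := fun _ => ℕ) n b i.castSucc)) = fun _ => F n := by
    funext b
    exact congrArg F (funext fun i => by rw [Fin.snoc_castSucc])
  rw [h]
  exact Tendsto.limUnder_eq tendsto_const_nhds

set_option maxHeartbeats 1000000 in
lemma ultraLim_prefix : ∀ (k j : ℕ) (h : j ≤ k) (U : Fin k → Ultrafilter ℕ)
    (F : (Fin j → ℕ) → ℝ),
    ultraLim k U (fun n => F (fun i => n (Fin.castLE h i))) =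
    ultraLim j (fun i => U (Fin.castLE h i)) F := by
  intro k
  induction k with
  | zero =>
      intro j h U F
      have : j = 0 := Nat.le_zero.mp h
      subst this
      exact congrArg F (funext fun i => i.elim0)
  | succ k ih =>
      intro j h U F
      rcases Nat.lt_or_ge j (k+1) with hj | hj
      · have h' : j ≤ k := Nat.lt_succ_iff.mp hj
        have key : (fun n : Fin (k+1) → ℕ => F (fun i => n (Fin.castLE h i)))
            = fun n => (fun m : Fin k → ℕ => F (fun i => m (Fin.castLE h' i)))
                (fun i' => n i'.castSucc) := by
          funext n
          exact congrArg F (funext fun i => congrArg n (Fin.ext rfl))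
        calc ultraLim (k+1) U (fun n => F (fun i => n (Fin.castLE h i)))
            = ultraLim (k+1) U (fun n =>
                (fun m : Fin k → ℕ => F (fun i => m (Fin.castLE h' i)))
                  (fun i' => n i'.castSucc)) := congrArg _ key
          _ = ultraLim k (fun i => U i.castSucc)
                (fun m : Fin k → ℕ => F (fun i => m (Fin.castLE h' i))) :=
              ultraLim_castSucc k U (fun m => F fun i => m (Fin.castLE h' i))
          _ = ultraLim j (fun i => U (Fin.castLE h' i).castSucc) F := ih j h' _ _
          _ = ultraLim j (fun i => U (Fin.castLE h i)) F := rfl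
      · have : j = k + 1 := le_antisymm h hj
        subst this
        have hc : ∀ i : Fin (k+1), Fin.castLE h i = i := fun i => Fin.ext rfl
        simp only [hc]

section Main
variable {X : Type*} [NormedAddCommGroup X] [NormedSpace ℝ X]

/-- The partial vector `x + ∑_{i<j} a_i t(n₁..n_{i+1})`. -/
noncomputable def yvec {k : ℕ} (t : TreeU X k) (x : X) (a : Fin k → ℝ)
    (j : ℕ) (hj : j ≤ k) (p : Fin j → ℕ) : X :=
  x + ∑ i : Fin j, a (Fin.castLE hj i) •
      t (Fin.castLE hj i) (fun l => p (Fin.castLE i.isLt l))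

lemma norm_yvec_le {k : ℕ} (t : TreeU X k) (ht : NormalizedU t) (x : X) (a : Fin k → ℝ)
    (j : ℕ) (hj : j ≤ k) (p : Fin j → ℕ) :
    ‖yvec t x a j hj p‖ ≤ ‖x‖ + ∑ i : Fin j, |a (Fin.castLE hj i)| := by
  refine (norm_add_le _ _).trans ?_
  gcongr
  refine (norm_sum_le _ _).trans ?_
  apply Finset.sum_le_sum
  intro i _
  rw [norm_smul, ht, mul_one, Real.norm_eq_abs]

lemma treeNorm_trunc {k : ℕ} (U : Fin k → Ultrafilter ℕ) (t : TreeU X k)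
    (x : X) (a : Fin k → ℝ) (j : ℕ) (hj : j ≤ k) :
    treeNorm U t x (fun i => if i.1 < j then a i else 0) =
    ultraLim j (fun i => U (Fin.castLE hj i)) (fun p => ‖yvec t x a j hj p‖) := by
  rw [← ultraLim_prefix k j hj U]
  unfold treeNorm
  congr 1
  funext n
  congr 1
  unfold yvec
  congr 1
  have hsum : ∀ (f : Fin k → X), (∀ i : Fin k, j ≤ i.1 → f i = 0) →
      ∑ i : Fin k, f i = ∑ i : Fin j, f (Fin.castLE hj i) := by
    intro f hf
    calc ∑ i : Fin k, f i
        = ∑ i ∈ Finset.map (Fin.castLEEmb hj) Finset.univ, f i := by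
          symm
          apply Finset.sum_subset (Finset.subset_univ _)
          intro i _ hi
          apply hf
          by_contra hlt
          push_neg at hlt
          exact hi (Finset.mem_map.mpr ⟨⟨i.1, hlt⟩, Finset.mem_univ _, Fin.ext rfl⟩)
      _ = ∑ i : Fin j, f (Fin.castLE hj i) := by rw [Finset.sum_map]; rfl
  rw [hsum]
  · apply Finset.sum_congr rfl
    intro i _
    have hpos : ((fun i' : Fin k => if i'.1 < j then a i' else 0) (Fin.castLE hj i))
        = a (Fin.castLE hj i) := if_pos i.isLt
    rw [hpos]
    rfl
  · intro i hi
    have hneg : ((fun i' : Fin k => if i'.1 < j then a i' else 0) i) = 0 :=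
      if_neg (by omega)
    rw [hneg, zero_smul]

lemma yvec_snoc {k : ℕ} (t : TreeU X k) (x : X) (a : Fin k → ℝ)
    (j : ℕ) (h : j < k) (p : Fin j → ℕ) (b : ℕ) :
    yvec t x a (j+1) h (Fin.snoc p b) =
      yvec t x a j h.le p + a ⟨j, h⟩ • t ⟨j, h⟩ (Fin.snoc (α := fun _ => ℕ) p b) := by
  unfold yvec
  rw [Fin.sum_univ_castSucc, add_assoc]
  congr 2
  apply Finset.sum_congr rfl
  intro i _
  have harg : (fun l : Fin (i.1+1) =>
      Fin.snoc (α := fun _ => ℕ) p b (Fin.castLE (Fin.castSucc i).isLt l)) =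
      fun l => p (Fin.castLE i.isLt l) := by
    funext l
    show Fin.snoc (α := fun _ => ℕ) p b ((Fin.castLE i.isLt l).castSucc) = p (Fin.castLE i.isLt l)
    rw [Fin.snoc_castSucc]
  exact congrArg (fun v => a (Fin.castLE h i.castSucc) • t (Fin.castLE h i.castSucc) v) harg

end Main


section Main2
variable {X : Type*} [NormedAddCommGroup X] [NormedSpace ℝ X]

lemma pointwise_step {k : ℕ} (U : Fin k → Ultrafilter ℕ) (t : TreeU X k) (ht : NormalizedU t)
    (j : ℕ) (h : j < k) (y : X) (c : ℝ) (p : Fin j → ℕ)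
    (hp : ∀ φ : X →L[ℝ] ℝ,
      Tendsto (fun b : ℕ => φ (t ⟨j, h⟩ (Fin.snoc p b))) (U ⟨j, h⟩) (𝓝 0)) :
    ‖y‖ ≤ limUnder (U ⟨j, h⟩)
      (fun b => ‖y + c • t ⟨j, h⟩ (Fin.snoc (α := fun _ => ℕ) p b)‖) := by
  set v : ℕ → X := fun b => t ⟨j, h⟩ (Fin.snoc (α := fun _ => ℕ) p b) with hv
  have hbd : ∀ b, |‖y + c • v b‖| ≤ ‖y‖ + |c| := by
    intro b
    rw [abs_of_nonneg (norm_nonneg _)]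
    refine (norm_add_le _ _).trans ?_
    rw [norm_smul, ht, mul_one, Real.norm_eq_abs]
  obtain ⟨L, _, htL⟩ := exists_ultra_lim (U ⟨j, h⟩) _ _ hbd
  rw [htL.limUnder_eq]
  by_cases hy : y = 0
  · subst hy
    simpa using le_of_tendsto_of_tendsto' (tendsto_const_nhds (x := (0:ℝ))) htL
      (fun b => norm_nonneg _)
  · obtain ⟨φ, hφ1, hφy⟩ := exists_dual_vector ℝ y (norm_ne_zero_iff.mpr hy)
    have hφy' : φ y = ‖y‖ := by exact_mod_cast hφy
    have heq : ∀ b, φ (y + c • v b) = ‖y‖ + c * φ (v b) := by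
      intro b
      rw [map_add, map_smul, smul_eq_mul, hφy']
    have htend : Tendsto (fun b => φ (y + c • v b)) (U ⟨j, h⟩) (𝓝 ‖y‖) := by
      simp only [heq]
      have h0 : Tendsto (fun b => c * φ (v b)) (U ⟨j, h⟩) (𝓝 (c * 0)) :=
        (hp φ).const_mul c
      simpa using tendsto_const_nhds.add h0
    refine le_of_tendsto_of_tendsto' htend htL ?_
    intro b
    calc φ (y + c • v b) ≤ |φ (y + c • v b)| := le_abs_self _
      _ ≤ ‖φ‖ * ‖y + c • v b‖ := by
          rw [← Real.norm_eq_abs]; exact φ.le_opNorm _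
      _ = ‖y + c • v b‖ := by rw [hφ1, one_mul]

lemma step_lemma {k : ℕ} (U : Fin k → Ultrafilter ℕ) (t : TreeU X k)
    (ht : NormalizedU t) (hw : WeaklyNullU U t) (x : X) (a : Fin k → ℝ)
    (j : ℕ) (h : j < k) :
    treeNorm U t x (fun i => if i.1 < j then a i else 0) ≤
    treeNorm U t x (fun i => if i.1 < j + 1 then a i else 0) := by
  rw [treeNorm_trunc U t x a j h.le, treeNorm_trunc U t x a (j+1) h]
  have hrhs : ultraLim (j+1) (fun i => U (Fin.castLE h i))
      (fun q => ‖yvec t x a (j+1) h q‖)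
      = ultraLim j (fun i => U (Fin.castLE h.le i))
        (fun p => limUnder (U ⟨j, h⟩) (fun b =>
          ‖yvec t x a j h.le p + a ⟨j, h⟩ • t ⟨j, h⟩ (Fin.snoc (α := fun _ => ℕ) p b)‖)) := by
    show ultraLim j (fun i => U (Fin.castLE h.le i))
      (fun p => limUnder (U ⟨j, h⟩) (fun b => ‖yvec t x a (j+1) h (Fin.snoc p b)‖)) = _
    congr 1
    funext p
    congr 1
    funext b
    rw [yvec_snoc]
  rw [hrhs]
  set C₀ : ℝ := ‖x‖ + (∑ i : Fin j, |a (Fin.castLE h.le i)|) + |a ⟨j, h⟩| with hC₀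
  have hyb : ∀ p, ‖yvec t x a j h.le p‖ ≤ ‖x‖ + ∑ i : Fin j, |a (Fin.castLE h.le i)| :=
    fun p => norm_yvec_le t ht x a j h.le p
  apply ultraLim_le j _ _ _ C₀
  · intro p
    rw [abs_of_nonneg (norm_nonneg _)]
    exact (hyb p).trans (le_add_of_nonneg_right (abs_nonneg _))
  · intro p
    have hbd : ∀ b, |‖yvec t x a j h.le p + a ⟨j, h⟩ • t ⟨j, h⟩
        (Fin.snoc (α := fun _ => ℕ) p b)‖| ≤ C₀ := by
      intro b
      rw [abs_of_nonneg (norm_nonneg _)]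
      refine (norm_add_le _ _).trans ?_
      rw [norm_smul, ht, mul_one, Real.norm_eq_abs]
      exact add_le_add_left (hyb p) _
    obtain ⟨c, hc, htc⟩ := exists_ultra_lim (U ⟨j, h⟩) _ _ hbd
    rw [htc.limUnder_eq]
    exact hc
  · have hw' := hw ⟨j, h⟩
    refine iterEventually_mono j _ _ _ ?_ hw'
    intro p hp
    exact pointwise_step U t ht j h (yvec t x a j h.le p) (a ⟨j, h⟩) p hp

end Main2


/-- Monotonicity of `N_t^{Ū}`: truncating the coefficient sequence does not increase the norm. -/
theorem stmt11 (X : Type*) [NormedAddCommGroup X] [NormedSpace ℝ X] [CompleteSpace X]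
    (k : ℕ) (U : Fin k → Ultrafilter ℕ) (hU : ∀ i, FreeUF (U i))
    (t : TreeU X k) (ht : NormalizedU t) (hw : WeaklyNullU U t) :
    ∀ j : ℕ, j ≤ k → ∀ (x : X) (a : Fin k → ℝ),
      treeNorm U t x (fun i => if i.1 < j then a i else 0) ≤ treeNorm U t x a := by
  intro j hj x a
  have main : ∀ d jj, jj + d = k →
      treeNorm U t x (fun i => if i.1 < jj then a i else 0) ≤ treeNorm U t x a := by
    intro d
    induction d with
    | zero =>
        intro jj hjk
        have he : (fun i : Fin k => if i.1 < jj then a i else 0) = a :=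
          funext fun i => if_pos (by omega)
        rw [he]
    | succ d ih =>
        intro jj hjk
        exact (step_lemma U t ht hw x a jj (by omega)).trans (ih (jj+1) (by omega))
  exact main (k - j) j (by omega)
end
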